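/- arXiv:1402.4379 — 6 statements merged into one kernel-verified Lean document; each statement's English description precedes it below -/
import Mathlib

section
/- Let z > 0 and b > 1. If a ≥ 1 then ∫₀^∞ e^{-zt} t^{a-1} (1+t)^{b-a-1} dt ≤ e^z z^{1-b} Γ(b−1), while if 0 < a < 1 then ∫₀^∞ e^{-zt} t^{a-1} (1+t)^{b-a-1} dt ≤ a^{-1} 2^{b-a-1} + 2^{1-a} e^z z^{1-b} Γ(b−1). -/
open scoped Real
open MeasureTheory Set

-- integrability of the Gamma-type integrand
lemma auxI {z b : ℝ} (hz : 0 < z) (hb : 1 < b) :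
    IntegrableOn (fun u : ℝ => Real.exp (-(z*u)) * u ^ (b-2)) (Set.Ioi 0) := by
  have h := integrableOn_rpow_mul_exp_neg_mul_rpow (p := 1) (s := b-2) (b := z)
    (by linarith) one_pos hz
  refine h.congr_fun (fun x hx => ?_) measurableSet_Ioi
  simp only [Real.rpow_one]
  ring_nf

-- value of the Gamma-type integral
lemma auxV {z b : ℝ} (hz : 0 < z) (hb : 1 < b) :
    ∫ u in Set.Ioi (0:ℝ), Real.exp (-(z*u)) * u ^ (b-2) = z ^ (1-b) * Real.Gamma (b-1) := by
  have h := Real.integral_rpow_mul_exp_neg_mul_Ioi (a := b-1) (r := z) (by linarith) hz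
  have : ∫ u in Set.Ioi (0:ℝ), Real.exp (-(z*u)) * u ^ (b-2)
      = ∫ t in Set.Ioi (0:ℝ), t ^ (b-1-1) * Real.exp (-(z*t)) := by
    refine setIntegral_congr_fun measurableSet_Ioi (fun x hx => ?_)
    rw [show b-1-1 = b-2 by ring]; ring
  rw [this, h, show (1:ℝ)/z = z⁻¹ by ring, ← Real.rpow_neg_one z,
    ← Real.rpow_mul hz.le, show (-1:ℝ) * (b-1) = 1-b by ring]

lemma auxShiftInd (g : ℝ → ℝ) (s : ℝ) :
    (Set.Ioi s).indicator (fun t => g (1+t)) = fun x => (Set.Ioi (s+1)).indicator g (x+1) := by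
  funext x
  simp only [Set.indicator_apply, Set.mem_Ioi]
  by_cases h : s < x
  · rw [if_pos h, if_pos (by linarith), add_comm]
  · rw [if_neg h, if_neg (by intro hh; exact h (by linarith))]

lemma auxShiftIntble {g : ℝ → ℝ} {s : ℝ} (hg : IntegrableOn g (Set.Ioi (s+1))) :
    IntegrableOn (fun t => g (1+t)) (Set.Ioi s) := by
  have h2 := ((integrable_indicator_iff (measurableSet_Ioi (a := s+1))).2 hg).comp_add_right 1
  rw [← auxShiftInd] at h2
  exact (integrable_indicator_iff measurableSet_Ioi).1 h2

lemma auxShiftEq (g : ℝ → ℝ) (s : ℝ) :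
    ∫ t in Set.Ioi s, g (1+t) = ∫ u in Set.Ioi (s+1), g u := by
  rw [← integral_indicator measurableSet_Ioi, ← integral_indicator measurableSet_Ioi,
    auxShiftInd, integral_add_right_eq_self]

lemma auxPow {p : ℝ} (hp : -1 < p) : ∫ t in Set.Ioc (0:ℝ) 1, t ^ p = (p+1)⁻¹ := by
  rw [← intervalIntegral.integral_of_le zero_le_one, integral_rpow (Or.inl hp),
    Real.one_rpow, Real.zero_rpow (by linarith : p+1 ≠ 0)]
  ring

lemma part1 (z b : ℝ) (hz : 0 < z) (hb : 1 < b) (a : ℝ) (ha : 1 ≤ a) :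
    (∫ t in Set.Ioi (0:ℝ), Real.exp (-(z*t)) * t ^ (a-1) * (1+t) ^ (b-a-1)) ≤
      Real.exp z * z ^ (1-b) * Real.Gamma (b-1) := by
  set g : ℝ → ℝ := fun u => Real.exp (-(z*u)) * u ^ (b-2) with hg
  have hgI : IntegrableOn g (Set.Ioi 0) := auxI hz hb
  have hgI1 : IntegrableOn g (Set.Ioi (0+1)) := hgI.mono_set (Set.Ioi_subset_Ioi (by norm_num))
  have hgS : IntegrableOn (fun t => Real.exp z * g (1+t)) (Set.Ioi 0) :=
    (auxShiftIntble hgI1).const_mul _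
  have step1 : (∫ t in Set.Ioi (0:ℝ), Real.exp (-(z*t)) * t ^ (a-1) * (1+t) ^ (b-a-1)) ≤
      ∫ t in Set.Ioi (0:ℝ), Real.exp z * g (1+t) := by
    refine integral_mono_of_nonneg ?_ hgS ?_
    · filter_upwards [self_mem_ae_restrict measurableSet_Ioi] with t ht
      have ht0 : (0:ℝ) < t := ht
      have h1t : (0:ℝ) < 1 + t := by linarith
      positivity
    · filter_upwards [self_mem_ae_restrict measurableSet_Ioi] with t ht
      have ht0 : (0:ℝ) < t := ht
      have h1t : (0:ℝ) < 1 + t := by linarith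
      have e1 : Real.exp z * g (1+t) = Real.exp (-(z*t)) * (1+t)^(b-2) := by
        simp only [hg, ← mul_assoc, ← Real.exp_add]
        rw [show z + -(z*(1+t)) = -(z*t) by ring]
      rw [e1]
      have h2 : t^(a-1) ≤ (1+t)^(a-1) := Real.rpow_le_rpow ht0.le (by linarith) (by linarith)
      calc Real.exp (-(z*t)) * t ^ (a-1) * (1+t) ^ (b-a-1)
          ≤ Real.exp (-(z*t)) * (1+t) ^ (a-1) * (1+t) ^ (b-a-1) := by
            exact mul_le_mul_of_nonneg_right
              (mul_le_mul_of_nonneg_left h2 (Real.exp_nonneg _))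
              (Real.rpow_nonneg h1t.le _)
        _ = Real.exp (-(z*t)) * (1+t) ^ (b-2) := by
            rw [mul_assoc, ← Real.rpow_add h1t, show a-1+(b-a-1) = b-2 by ring]
  have step2 : (∫ t in Set.Ioi (0:ℝ), Real.exp z * g (1+t))
      = Real.exp z * ∫ u in Set.Ioi (0+1:ℝ), g u := by
    rw [integral_const_mul, auxShiftEq]
  have step3 : (∫ u in Set.Ioi (0+1:ℝ), g u) ≤ ∫ u in Set.Ioi (0:ℝ), g u := by
    refine setIntegral_mono_set hgI ?_ (HasSubset.Subset.eventuallyLE (Set.Ioi_subset_Ioi (by norm_num)))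
    filter_upwards [self_mem_ae_restrict measurableSet_Ioi] with u hu
    have : (0:ℝ) < u := hu
    positivity
  calc (∫ t in Set.Ioi (0:ℝ), Real.exp (-(z*t)) * t ^ (a-1) * (1+t) ^ (b-a-1))
      ≤ Real.exp z * ∫ u in Set.Ioi (0+1:ℝ), g u := step1.trans (le_of_eq step2)
    _ ≤ Real.exp z * ∫ u in Set.Ioi (0:ℝ), g u :=
        mul_le_mul_of_nonneg_left step3 (Real.exp_nonneg _)
    _ = Real.exp z * z ^ (1-b) * Real.Gamma (b-1) := by rw [auxV hz hb, mul_assoc]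

lemma auxTail {z b a t : ℝ} (ha : a ≤ 1) (ht : 1 ≤ t) :
    Real.exp (-(z*t)) * t ^ (a-1) * (1+t) ^ (b-a-1) ≤
      (2:ℝ) ^ (1-a) * (Real.exp z * (Real.exp (-(z*(1+t))) * (1+t) ^ (b-2))) := by
  have ht0 : (0:ℝ) < t := by linarith
  have h1t : (0:ℝ) < 1 + t := by linarith
  have eR : (2:ℝ) ^ (1-a) * (Real.exp z * (Real.exp (-(z*(1+t))) * (1+t) ^ (b-2)))
      = Real.exp (-(z*t)) * ((2:ℝ)^(1-a) * (1+t)^(a-1)) * (1+t) ^ (b-a-1) := by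
    have hexp : Real.exp z * Real.exp (-(z*(1+t))) = Real.exp (-(z*t)) := by
      rw [← Real.exp_add, show z + -(z*(1+t)) = -(z*t) by ring]
    rw [show b-2 = (a-1) + (b-a-1) by ring, Real.rpow_add h1t, ← hexp]
    ring
  rw [eR]
  refine mul_le_mul_of_nonneg_right (mul_le_mul_of_nonneg_left ?_ (Real.exp_nonneg _))
    (Real.rpow_nonneg h1t.le _)
  -- t^(a-1) ≤ 2^(1-a) * (1+t)^(a-1)
  have e1 : t ^ (a-1) = (t⁻¹) ^ (1-a) := by
    rw [← Real.rpow_neg_one t, ← Real.rpow_mul ht0.le, show (-1:ℝ)*(1-a) = a-1 by ring]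
  have e2 : (2:ℝ)^(1-a) * (1+t)^(a-1) = (2 * (1+t)⁻¹) ^ (1-a) := by
    rw [Real.mul_rpow (by norm_num) (by positivity), ← Real.rpow_neg_one (1+t),
      ← Real.rpow_mul h1t.le, show (-1:ℝ)*(1-a) = a-1 by ring]
  rw [e1, e2]
  refine Real.rpow_le_rpow (by positivity) ?_ (by linarith)
  rw [inv_le_iff_one_le_mul₀ ht0]
  have h3 := mul_le_mul_of_nonneg_right (show (1:ℝ)+t ≤ 2*t by linarith) (inv_pos.2 h1t).le
  rw [mul_inv_cancel₀ h1t.ne'] at h3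
  ring_nf at h3 ⊢
  linarith

lemma part2a (z b a : ℝ) (hz : 0 < z) (hb : 1 < b) (ha0 : 0 < a) (ha1 : a < 1)
    (hc : 0 ≤ b-a-1) :
    (∫ t in Set.Ioi (0:ℝ), Real.exp (-(z*t)) * t ^ (a-1) * (1+t) ^ (b-a-1)) ≤
      a⁻¹ * (2:ℝ) ^ (b-a-1) + (2:ℝ) ^ (1-a) * Real.exp z * z ^ (1-b) * Real.Gamma (b-1) := by
  set g : ℝ → ℝ := fun u => Real.exp (-(z*u)) * u ^ (b-2) with hg
  set h1 : ℝ → ℝ := fun t => (2:ℝ) ^ (b-a-1) * t ^ (a-1) with hh1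
  have hgI : IntegrableOn g (Set.Ioi 0) := auxI hz hb
  have hgI1 : IntegrableOn g (Set.Ioi (0+1)) := hgI.mono_set (Set.Ioi_subset_Ioi (by norm_num))
  have hgS : IntegrableOn (fun t => (2:ℝ)^(1-a) * (Real.exp z * g (1+t))) (Set.Ioi 0) :=
    ((auxShiftIntble hgI1).const_mul _).const_mul _
  have hI1 : IntegrableOn h1 (Set.Ioc 0 1) := by
    have h := intervalIntegral.intervalIntegrable_rpow' (a := 0) (b := 1)
      (show (-1:ℝ) < a-1 by linarith)
    rw [intervalIntegrable_iff, Set.uIoc_of_le zero_le_one] at h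
    exact h.const_mul _
  have hIndInt : Integrable ((Set.Ioc (0:ℝ) 1).indicator h1)
      (volume.restrict (Set.Ioi (0:ℝ))) :=
    (hI1.integrable_indicator measurableSet_Ioc).restrict
  have hGInt : Integrable (fun t => (Set.Ioc (0:ℝ) 1).indicator h1 t
      + (2:ℝ)^(1-a) * (Real.exp z * g (1+t))) (volume.restrict (Set.Ioi (0:ℝ))) :=
    hIndInt.add hgS
  have hIndNonneg : ∀ x : ℝ, 0 ≤ (Set.Ioc (0:ℝ) 1).indicator h1 x := by
    intro x
    refine Set.indicator_nonneg (fun y hy => ?_) x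
    have : (0:ℝ) < y := hy.1
    positivity
  have step1 : (∫ t in Set.Ioi (0:ℝ), Real.exp (-(z*t)) * t ^ (a-1) * (1+t) ^ (b-a-1)) ≤
      ∫ t in Set.Ioi (0:ℝ), ((Set.Ioc (0:ℝ) 1).indicator h1 t
        + (2:ℝ)^(1-a) * (Real.exp z * g (1+t))) := by
    refine integral_mono_of_nonneg ?_ hGInt ?_
    · filter_upwards [self_mem_ae_restrict measurableSet_Ioi] with t ht
      have ht0 : (0:ℝ) < t := ht
      have h1t : (0:ℝ) < 1 + t := by linarith
      positivity
    · filter_upwards [self_mem_ae_restrict measurableSet_Ioi] with t ht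
      have ht0 : (0:ℝ) < t := ht
      have h1t : (0:ℝ) < 1 + t := by linarith
      have hSecNonneg : 0 ≤ (2:ℝ)^(1-a) * (Real.exp z * g (1+t)) := by
        simp only [hg]; positivity
      rcases le_or_gt t 1 with hle | hgt
      · have hind : (Set.Ioc (0:ℝ) 1).indicator h1 t = h1 t :=
          Set.indicator_of_mem (Set.mem_Ioc.mpr ⟨ht0, hle⟩) h1
        have hexp : Real.exp (-(z*t)) ≤ 1 := by
          rw [← Real.exp_zero]
          exact Real.exp_le_exp.2 (by nlinarith)
        have hA : Real.exp (-(z*t)) * t ^ (a-1) * (1+t) ^ (b-a-1) ≤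
            t ^ (a-1) * (2:ℝ) ^ (b-a-1) := by
          refine mul_le_mul ?_ (Real.rpow_le_rpow h1t.le (by linarith) hc)
            (Real.rpow_nonneg h1t.le _) (Real.rpow_nonneg ht0.le _)
          exact mul_le_of_le_one_left (Real.rpow_nonneg ht0.le _) hexp
        have : t ^ (a-1) * (2:ℝ) ^ (b-a-1) = h1 t := by rw [hh1]; ring
        linarith [hA, hSecNonneg]
      · have hT : Real.exp (-(z*t)) * t ^ (a-1) * (1+t) ^ (b-a-1) ≤
            (2:ℝ)^(1-a) * (Real.exp z * g (1+t)) := by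
          simp only [hg]
          exact auxTail (z := z) (b := b) ha1.le hgt.le
        linarith [hIndNonneg t, hT]
  have e1 : (∫ t in Set.Ioi (0:ℝ), ((Set.Ioc (0:ℝ) 1).indicator h1 t
        + (2:ℝ)^(1-a) * (Real.exp z * g (1+t))))
      = (∫ t in Set.Ioc (0:ℝ) 1, h1 t)
        + (2:ℝ)^(1-a) * (Real.exp z * ∫ u in Set.Ioi (0+1:ℝ), g u) := by
    rw [integral_add hIndInt hgS, setIntegral_indicator measurableSet_Ioc,
      Set.inter_eq_right.2 Set.Ioc_subset_Ioi_self, integral_const_mul, integral_const_mul,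
      integral_const_mul, auxShiftEq]
  have e2 : (∫ t in Set.Ioc (0:ℝ) 1, h1 t) = (2:ℝ)^(b-a-1) * a⁻¹ := by
    rw [hh1, integral_const_mul, auxPow (by linarith : (-1:ℝ) < a-1),
      show a-1+1 = a by ring]
  have step3 : (∫ u in Set.Ioi (0+1:ℝ), g u) ≤ ∫ u in Set.Ioi (0:ℝ), g u := by
    refine setIntegral_mono_set hgI ?_
      (HasSubset.Subset.eventuallyLE (Set.Ioi_subset_Ioi (by norm_num)))
    filter_upwards [self_mem_ae_restrict measurableSet_Ioi] with u hu
    have : (0:ℝ) < u := hu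
    positivity
  have hfin : (2:ℝ)^(1-a) * (Real.exp z * ∫ u in Set.Ioi (0+1:ℝ), g u) ≤
      (2:ℝ)^(1-a) * Real.exp z * z ^ (1-b) * Real.Gamma (b-1) := by
    rw [mul_assoc, mul_assoc]
    refine mul_le_mul_of_nonneg_left ?_ (Real.rpow_nonneg (by norm_num) _)
    rw [← auxV hz hb]
    exact mul_le_mul_of_nonneg_left step3 (Real.exp_nonneg _)
  calc (∫ t in Set.Ioi (0:ℝ), Real.exp (-(z*t)) * t ^ (a-1) * (1+t) ^ (b-a-1))
      ≤ (2:ℝ)^(b-a-1) * a⁻¹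
        + (2:ℝ)^(1-a) * (Real.exp z * ∫ u in Set.Ioi (0+1:ℝ), g u) := by
        rw [← e2]; exact step1.trans (le_of_eq e1)
    _ ≤ a⁻¹ * (2:ℝ) ^ (b-a-1) + (2:ℝ) ^ (1-a) * Real.exp z * z ^ (1-b) * Real.Gamma (b-1) := by
        rw [mul_comm ((2:ℝ)^(b-a-1))]
        exact add_le_add_right hfin _

lemma part2b (z b a : ℝ) (hz : 0 < z) (hb : 1 < b) (ha0 : 0 < a) (ha1 : a < 1)
    (hc : b-a-1 < 0) :
    (∫ t in Set.Ioi (0:ℝ), Real.exp (-(z*t)) * t ^ (a-1) * (1+t) ^ (b-a-1)) ≤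
      a⁻¹ * (2:ℝ) ^ (b-a-1) + (2:ℝ) ^ (1-a) * Real.exp z * z ^ (1-b) * Real.Gamma (b-1) := by
  set g : ℝ → ℝ := fun u => Real.exp (-(z*u)) * u ^ (b-2) with hg
  set h2 : ℝ → ℝ := fun t => (2:ℝ) ^ (1-a) * t ^ (b-2) with hh2
  set sec : ℝ → ℝ := fun t => (2:ℝ)^(1-a) * (Real.exp z * g (1+t)) with hsec
  have hgI : IntegrableOn g (Set.Ioi 0) := auxI hz hb
  have hgI2 : IntegrableOn g (Set.Ioi (1+1)) := hgI.mono_set (Set.Ioi_subset_Ioi (by norm_num))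
  have hsecI : IntegrableOn sec (Set.Ioi 1) := ((auxShiftIntble hgI2).const_mul _).const_mul _
  have hI2 : IntegrableOn h2 (Set.Ioc 0 1) := by
    have h := intervalIntegral.intervalIntegrable_rpow' (a := 0) (b := 1)
      (show (-1:ℝ) < b-2 by linarith)
    rw [intervalIntegrable_iff, Set.uIoc_of_le zero_le_one] at h
    exact h.const_mul _
  have hIndInt : Integrable ((Set.Ioc (0:ℝ) 1).indicator h2)
      (volume.restrict (Set.Ioi (0:ℝ))) :=
    (hI2.integrable_indicator measurableSet_Ioc).restrict
  have hIndInt2 : Integrable ((Set.Ioi (1:ℝ)).indicator sec)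
      (volume.restrict (Set.Ioi (0:ℝ))) :=
    (hsecI.integrable_indicator measurableSet_Ioi).restrict
  have hGInt : Integrable (fun t => (Set.Ioc (0:ℝ) 1).indicator h2 t
      + (Set.Ioi (1:ℝ)).indicator sec t) (volume.restrict (Set.Ioi (0:ℝ))) :=
    hIndInt.add hIndInt2
  have hIndNonneg : ∀ x : ℝ, 0 ≤ (Set.Ioc (0:ℝ) 1).indicator h2 x := by
    intro x
    refine Set.indicator_nonneg (fun y hy => ?_) x
    have : (0:ℝ) < y := hy.1
    positivity
  have hIndNonneg2 : ∀ x : ℝ, 0 ≤ (Set.Ioi (1:ℝ)).indicator sec x := by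
    intro x
    refine Set.indicator_nonneg (fun y hy => ?_) x
    have : (1:ℝ) < y := hy
    have : (0:ℝ) < 1 + y := by linarith
    simp only [hsec, hg]
    positivity
  have step1 : (∫ t in Set.Ioi (0:ℝ), Real.exp (-(z*t)) * t ^ (a-1) * (1+t) ^ (b-a-1)) ≤
      ∫ t in Set.Ioi (0:ℝ), ((Set.Ioc (0:ℝ) 1).indicator h2 t
        + (Set.Ioi (1:ℝ)).indicator sec t) := by
    refine integral_mono_of_nonneg ?_ hGInt ?_
    · filter_upwards [self_mem_ae_restrict measurableSet_Ioi] with t ht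
      have ht0 : (0:ℝ) < t := ht
      have h1t : (0:ℝ) < 1 + t := by linarith
      positivity
    · filter_upwards [self_mem_ae_restrict measurableSet_Ioi] with t ht
      have ht0 : (0:ℝ) < t := ht
      have h1t : (0:ℝ) < 1 + t := by linarith
      rcases le_or_gt t 1 with hle | hgt
      · have hind : (Set.Ioc (0:ℝ) 1).indicator h2 t = h2 t :=
          Set.indicator_of_mem (Set.mem_Ioc.mpr ⟨ht0, hle⟩) h2
        have hexp : Real.exp (-(z*t)) ≤ 1 := by
          rw [← Real.exp_zero]
          exact Real.exp_le_exp.2 (by nlinarith)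
        have hbase : (1+t) ^ (b-a-1) ≤ (2:ℝ)^(1-a) * t ^ (b-a-1) := by
          have h1 : (1+t) ^ (b-a-1) ≤ (2*t) ^ (b-a-1) :=
            Real.rpow_le_rpow_of_nonpos (by linarith) (by linarith) hc.le
          have h2' : ((2:ℝ)*t) ^ (b-a-1) = (2:ℝ)^(b-a-1) * t ^ (b-a-1) :=
            Real.mul_rpow (by norm_num) ht0.le
          have h3 : (2:ℝ)^(b-a-1) ≤ (2:ℝ)^(1-a) :=
            Real.rpow_le_rpow_of_exponent_le one_le_two (by linarith)
          calc (1+t) ^ (b-a-1) ≤ (2:ℝ)^(b-a-1) * t ^ (b-a-1) := h2' ▸ h1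
            _ ≤ (2:ℝ)^(1-a) * t ^ (b-a-1) :=
              mul_le_mul_of_nonneg_right h3 (Real.rpow_nonneg ht0.le _)
        have hA : Real.exp (-(z*t)) * t ^ (a-1) * (1+t) ^ (b-a-1) ≤ h2 t := by
          have step : Real.exp (-(z*t)) * t ^ (a-1) * (1+t) ^ (b-a-1) ≤
              t ^ (a-1) * ((2:ℝ)^(1-a) * t ^ (b-a-1)) :=
            mul_le_mul (mul_le_of_le_one_left (Real.rpow_nonneg ht0.le _) hexp) hbase
              (Real.rpow_nonneg h1t.le _)
              (Real.rpow_nonneg ht0.le _)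
          have e : t ^ (a-1) * ((2:ℝ)^(1-a) * t ^ (b-a-1)) = h2 t := by
            rw [hh2, mul_comm (t ^ (a-1)), mul_assoc, ← Real.rpow_add ht0,
              show b-a-1+(a-1) = b-2 by ring]
          linarith [step, le_of_eq e]
        linarith [hA, hIndNonneg2 t]
      · have hind : (Set.Ioi (1:ℝ)).indicator sec t = sec t :=
          Set.indicator_of_mem (Set.mem_Ioi.mpr hgt) sec
        have hT : Real.exp (-(z*t)) * t ^ (a-1) * (1+t) ^ (b-a-1) ≤ sec t := by
          simp only [hsec, hg]
          exact auxTail (z := z) (b := b) ha1.le hgt.le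
        linarith [hT, hIndNonneg t]
  have e1 : (∫ t in Set.Ioi (0:ℝ), ((Set.Ioc (0:ℝ) 1).indicator h2 t
        + (Set.Ioi (1:ℝ)).indicator sec t))
      = (2:ℝ)^(1-a) * (b-1)⁻¹
        + (2:ℝ)^(1-a) * (Real.exp z * ∫ u in Set.Ioi (1+1:ℝ), g u) := by
    rw [integral_add hIndInt hIndInt2, setIntegral_indicator measurableSet_Ioc,
      setIntegral_indicator measurableSet_Ioi,
      Set.inter_eq_right.2 Set.Ioc_subset_Ioi_self,
      Set.inter_eq_right.2 (Set.Ioi_subset_Ioi (by norm_num : (0:ℝ) ≤ 1))]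
    congr 1
    · rw [hh2, integral_const_mul, auxPow (by linarith : (-1:ℝ) < b-2),
        show b-2+1 = b-1 by ring]
    · simp only [hsec]
      rw [integral_const_mul, integral_const_mul, auxShiftEq]
  -- key numeric inequality
  have hsplit : (∫ u in Set.Ioi (0:ℝ), g u)
      = (∫ u in Set.Ioc (0:ℝ) (1+1), g u) + ∫ u in Set.Ioi (1+1:ℝ), g u := by
    rw [← setIntegral_union (Set.Ioc_disjoint_Ioi le_rfl) measurableSet_Ioi
      (hgI.mono_set Set.Ioc_subset_Ioi_self) hgI2,
      Set.Ioc_union_Ioi_eq_Ioi (by norm_num : (0:ℝ) ≤ 1+1)]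
  have hlow : (b-1)⁻¹ ≤ Real.exp z * ∫ u in Set.Ioc (0:ℝ) (1+1), g u := by
    have i1 : (b-1)⁻¹ = ∫ u in Set.Ioc (0:ℝ) 1, u ^ (b-2) := by
      rw [auxPow (by linarith : (-1:ℝ) < b-2), show b-2+1 = b-1 by ring]
    have i2 : (∫ u in Set.Ioc (0:ℝ) 1, u ^ (b-2)) ≤
        ∫ u in Set.Ioc (0:ℝ) 1, Real.exp z * g u := by
      refine setIntegral_mono_on ?_ ?_ measurableSet_Ioc (fun u hu => ?_)
      · have h := intervalIntegral.intervalIntegrable_rpow' (a := 0) (b := 1)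
          (show (-1:ℝ) < b-2 by linarith)
        rwa [intervalIntegrable_iff, Set.uIoc_of_le zero_le_one] at h
      · exact ((hgI.mono_set Set.Ioc_subset_Ioi_self).const_mul _)
      · have hu0 : (0:ℝ) < u := hu.1
        have hone : (1:ℝ) ≤ Real.exp z * Real.exp (-(z*u)) := by
          rw [← Real.exp_add, ← Real.exp_zero]
          exact Real.exp_le_exp.2 (by nlinarith [hu.2])
        have := mul_le_mul_of_nonneg_right hone (Real.rpow_nonneg hu0.le (b-2))
        simp only [hg]
        calc u ^ (b-2) = 1 * u ^ (b-2) := (one_mul _).symm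
          _ ≤ Real.exp z * Real.exp (-(z*u)) * u ^ (b-2) := this
          _ = Real.exp z * (Real.exp (-(z*u)) * u ^ (b-2)) := by ring
    have i3 : (∫ u in Set.Ioc (0:ℝ) 1, Real.exp z * g u) ≤
        ∫ u in Set.Ioc (0:ℝ) (1+1), Real.exp z * g u := by
      refine setIntegral_mono_set ((hgI.mono_set Set.Ioc_subset_Ioi_self).const_mul _)
        ?_ (HasSubset.Subset.eventuallyLE (Set.Ioc_subset_Ioc_right (by norm_num)))
      filter_upwards [self_mem_ae_restrict measurableSet_Ioc] with u hu
      have : (0:ℝ) < u := hu.1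
      simp only [hg]
      positivity
    rw [integral_const_mul] at i3
    calc (b-1)⁻¹ = ∫ u in Set.Ioc (0:ℝ) 1, u ^ (b-2) := i1
      _ ≤ ∫ u in Set.Ioc (0:ℝ) 1, Real.exp z * g u := i2
      _ ≤ Real.exp z * ∫ u in Set.Ioc (0:ℝ) (1+1), g u := by
          rw [← integral_const_mul] at i3 ⊢
          exact i3
  have key : (b-1)⁻¹ + Real.exp z * (∫ u in Set.Ioi (1+1:ℝ), g u)
      ≤ Real.exp z * (z ^ (1-b) * Real.Gamma (b-1)) := by
    rw [← auxV hz hb, hsplit, mul_add]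
    exact add_le_add_left hlow _
  have h2pos : (0:ℝ) ≤ (2:ℝ)^(1-a) := Real.rpow_nonneg (by norm_num) _
  have hfirst : (0:ℝ) ≤ a⁻¹ * (2:ℝ) ^ (b-a-1) := by positivity
  calc (∫ t in Set.Ioi (0:ℝ), Real.exp (-(z*t)) * t ^ (a-1) * (1+t) ^ (b-a-1))
      ≤ (2:ℝ)^(1-a) * (b-1)⁻¹
        + (2:ℝ)^(1-a) * (Real.exp z * ∫ u in Set.Ioi (1+1:ℝ), g u) :=
        step1.trans (le_of_eq e1)
    _ = (2:ℝ)^(1-a) * ((b-1)⁻¹ + Real.exp z * ∫ u in Set.Ioi (1+1:ℝ), g u) := by ring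
    _ ≤ (2:ℝ)^(1-a) * (Real.exp z * (z ^ (1-b) * Real.Gamma (b-1))) :=
        mul_le_mul_of_nonneg_left key h2pos
    _ ≤ a⁻¹ * (2:ℝ) ^ (b-a-1) + (2:ℝ) ^ (1-a) * Real.exp z * z ^ (1-b) * Real.Gamma (b-1) := by
        nlinarith [hfirst]

theorem stmt2 (z b : ℝ) (hz : 0 < z) (hb : 1 < b) :
    (∀ a : ℝ, 1 ≤ a →
      (∫ t in Set.Ioi (0:ℝ), Real.exp (-(z*t)) * t ^ (a-1) * (1+t) ^ (b-a-1)) ≤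
        Real.exp z * z ^ (1-b) * Real.Gamma (b-1)) ∧
    (∀ a : ℝ, 0 < a → a < 1 →
      (∫ t in Set.Ioi (0:ℝ), Real.exp (-(z*t)) * t ^ (a-1) * (1+t) ^ (b-a-1)) ≤
        a⁻¹ * (2:ℝ) ^ (b-a-1) + (2:ℝ) ^ (1-a) * Real.exp z * z ^ (1-b) * Real.Gamma (b-1)) := by
  constructor
  · exact fun a ha => part1 z b hz hb a ha
  · intro a ha0 ha1
    rcases le_or_gt 0 (b-a-1) with hc | hc
    · exact part2a z b a hz hb ha0 ha1 hc
    · exact part2b z b a hz hb ha0 ha1 hc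
end

section
/- Let a > 0 and b > 0. The function F : (0,∞) → ℝ defined by F(z) = ∫₀^∞ e^{-zt} t^{a-1} (1+t)^{b-a-1} dt is differentiable on (0,∞) and satisfies |F'(z)| ≤ Γ(b) e^z z^{-b} for every z > 0. -/
open scoped Real
open MeasureTheory Set

lemma shift_embed : MeasurableEmbedding (fun x : ℝ => 1 + x) :=
  (Homeomorph.addLeft (1:ℝ)).measurableEmbedding

lemma shift_integral (f g : ℝ → ℝ) (hfg : ∀ t, g t = f (1 + t)) :
    ∫ t in Set.Ioi (0:ℝ), g t = ∫ s in Set.Ioi (1:ℝ), f s := by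
  have h := shift_embed.setIntegral_map (μ := volume) f (Ioi 1)
  rw [map_add_left_eq_self (volume : Measure ℝ) 1] at h
  have hp : (fun x : ℝ => 1 + x) ⁻¹' Ioi 1 = Ioi 0 := by ext x; simp
  rw [hp] at h
  rw [show g = fun t => f (1 + t) from funext hfg]
  exact h.symm

lemma shift_integrableOn (f g : ℝ → ℝ) (hfg : ∀ t, g t = f (1 + t))
    (h : IntegrableOn f (Ioi 1)) : IntegrableOn g (Ioi 0) := by
  have h2 := shift_embed.integrableOn_map_iff (f := f) (s := Ioi 1)
    (μ := (volume : Measure ℝ))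
  rw [map_add_left_eq_self (volume : Measure ℝ) 1] at h2
  have h3 := h2.mp h
  have hp : (fun x : ℝ => 1 + x) ⁻¹' Ioi 1 = Ioi 0 := by ext x; simp
  rw [hp] at h3
  exact h3.congr_fun (fun x _ => (hfg x).symm) measurableSet_Ioi

lemma gamma_scaled_integrable {c q : ℝ} (hc : 0 < c) (hq : -1 < q) :
    IntegrableOn (fun x : ℝ => Real.exp (-(c*x)) * x ^ q) (Ioi 0) := by
  have h0 : IntegrableOn (fun x : ℝ => Real.exp (-x) * x ^ ((q+1) - 1)) (Ioi 0) :=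
    Real.GammaIntegral_convergent (by linarith)
  have h1 : IntegrableOn (fun x : ℝ => Real.exp (-(c*x)) * (c*x) ^ q) (Ioi 0) := by
    have := (MeasureTheory.integrableOn_Ioi_comp_mul_left_iff
      (fun x : ℝ => Real.exp (-x) * x ^ ((q+1)-1)) 0 hc).mpr (by simpa using h0)
    simpa using this
  have h2 : IntegrableOn (fun x : ℝ => c ^ q * (Real.exp (-(c*x)) * x ^ q)) (Ioi 0) := by
    apply h1.congr_fun ?_ measurableSet_Ioi
    intro x hx
    show Real.exp (-(c*x)) * (c*x) ^ q = c ^ q * (Real.exp (-(c*x)) * x ^ q)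
    rw [Real.mul_rpow hc.le (le_of_lt hx)]
    ring
  have h3 : IntegrableOn (fun x : ℝ => c ^ q * (Real.exp (-(c*x)) * x ^ q) / c ^ q)
      (Ioi 0) := h2.div_const (c ^ q)
  apply h3.congr_fun ?_ measurableSet_Ioi
  intro x _
  have hcq : (c:ℝ) ^ q ≠ 0 := by positivity
  field_simp

lemma shifted_integrable {c q : ℝ} (hc : 0 < c) (hq : -1 < q) :
    IntegrableOn (fun t : ℝ => Real.exp (-(c*t)) * (1+t) ^ q) (Ioi 0) := by
  apply shift_integrableOn (fun s : ℝ => Real.exp c * (Real.exp (-(c*s)) * s ^ q))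
  · intro t
    rw [show Real.exp c * (Real.exp (-(c*(1+t))) * (1+t) ^ q)
        = (Real.exp c * Real.exp (-(c*(1+t)))) * (1+t) ^ q by ring, ← Real.exp_add]
    congr 1
    ring
  · exact ((gamma_scaled_integrable hc hq).mono_set (Ioi_subset_Ioi (by norm_num))).const_mul _

lemma shifted_integral_le {z q : ℝ} (hz : 0 < z) (hq : -1 < q) :
    ∫ t in Ioi (0:ℝ), Real.exp (-(z*t)) * (1+t) ^ q
      ≤ Real.exp z * ((1/z) ^ (q+1) * Real.Gamma (q+1)) := by
  rw [shift_integral (fun s : ℝ => Real.exp z * (s ^ q * Real.exp (-(z*s))))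
    (fun t : ℝ => Real.exp (-(z*t)) * (1+t) ^ q) ?_]
  · have hInt : IntegrableOn (fun s : ℝ => s ^ q * Real.exp (-(z*s))) (Ioi 0) := by
      apply (gamma_scaled_integrable hz hq).congr_fun ?_ measurableSet_Ioi
      intro x _; show _ = _; ring
    calc ∫ s in Ioi (1:ℝ), Real.exp z * (s ^ q * Real.exp (-(z*s)))
        = Real.exp z * ∫ s in Ioi (1:ℝ), s ^ q * Real.exp (-(z*s)) := by
          rw [integral_const_mul]
      _ ≤ Real.exp z * ∫ s in Ioi (0:ℝ), s ^ q * Real.exp (-(z*s)) := by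
          apply mul_le_mul_of_nonneg_left ?_ (Real.exp_pos z).le
          apply setIntegral_mono_set hInt
          · filter_upwards [ae_restrict_mem measurableSet_Ioi] with x hx
            have : (0:ℝ) < x := hx
            positivity
          · exact Filter.Eventually.of_forall (Ioi_subset_Ioi (by norm_num))
      _ ≤ Real.exp z * ((1/z) ^ (q+1) * Real.Gamma (q+1)) := by
          apply le_of_eq
          congr 1
          rw [show (fun s : ℝ => s ^ q * Real.exp (-(z*s)))
              = (fun s : ℝ => s ^ ((q+1)-1) * Real.exp (-(z*s))) by norm_num]
          exact Real.integral_rpow_mul_exp_neg_mul_Ioi (by linarith) hz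
  · intro t
    show Real.exp (-(z*t)) * (1+t) ^ q = Real.exp z * ((1+t) ^ q * Real.exp (-(z*(1+t))))
    rw [show Real.exp z * ((1+t) ^ q * Real.exp (-(z*(1+t))))
        = (Real.exp z * Real.exp (-(z*(1+t)))) * (1+t) ^ q by ring, ← Real.exp_add]
    rw [show z + -(z*(1+t)) = -(z*t) by ring]

theorem stmt3 (a b : ℝ) (ha : 0 < a) (hb : 0 < b) :
    ∀ z : ℝ, 0 < z →
      DifferentiableAt ℝ
        (fun w : ℝ => ∫ t in Set.Ioi (0:ℝ), Real.exp (-(w*t)) * t ^ (a-1) * (1+t) ^ (b-a-1)) z ∧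
      |deriv (fun w : ℝ =>
          ∫ t in Set.Ioi (0:ℝ), Real.exp (-(w*t)) * t ^ (a-1) * (1+t) ^ (b-a-1)) z| ≤
        Real.Gamma b * Real.exp z * z ^ (-b) := by
  intro z hz
  set c : ℝ := max (b - a - 1) 0 with hc
  have hc0 : 0 ≤ c := le_max_right _ _
  -- measurability of the integrand family
  have hmeas : ∀ w : ℝ, AEStronglyMeasurable
      (fun t : ℝ => Real.exp (-(w*t)) * t ^ (a-1) * (1+t) ^ (b-a-1))
      (volume.restrict (Ioi 0)) := by
    intro w
    apply Measurable.aestronglyMeasurable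
    fun_prop
  have hmeas' : AEStronglyMeasurable
      (fun t : ℝ => Real.exp (-(z*t)) * -t * t ^ (a-1) * (1+t) ^ (b-a-1))
      (volume.restrict (Ioi 0)) := by
    apply Measurable.aestronglyMeasurable
    fun_prop
  -- integrability of F z
  have hFint : Integrable (fun t : ℝ => Real.exp (-(z*t)) * t ^ (a-1) * (1+t) ^ (b-a-1))
      (volume.restrict (Ioi 0)) := by
    have hbig : IntegrableOn (fun t : ℝ => (2:ℝ) ^ c *
        (Real.exp (-(z*t)) * t ^ (a-1) + Real.exp (-(z*t)) * t ^ (a-1+c))) (Ioi 0) :=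
      (((gamma_scaled_integrable hz (by linarith)).add
        (gamma_scaled_integrable hz (by linarith : (-1:ℝ) < a-1+c))).const_mul _)
    apply Integrable.mono' hbig (hmeas z)
    filter_upwards [ae_restrict_mem measurableSet_Ioi] with t ht
    have ht0 : (0:ℝ) < t := ht
    have h1t : (0:ℝ) < 1 + t := by linarith
    rw [Real.norm_eq_abs, abs_of_nonneg (by positivity)]
    have hpow : (1+t) ^ (b-a-1) ≤ (2:ℝ) ^ c * (1 + t ^ c) := by
      have h1 : (1+t) ^ (b-a-1) ≤ (1+t) ^ c :=
        Real.rpow_le_rpow_of_exponent_le (by linarith) (le_max_left _ _)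
      refine h1.trans ?_
      rcases le_total t 1 with htle | htle
      · have : (1+t) ^ c ≤ (2:ℝ) ^ c :=
          Real.rpow_le_rpow h1t.le (by linarith) hc0
        nlinarith [Real.rpow_nonneg ht0.le c, Real.rpow_nonneg (by norm_num : (0:ℝ) ≤ 2) c]
      · have h2 : (1+t) ^ c ≤ (2*t) ^ c :=
          Real.rpow_le_rpow h1t.le (by linarith) hc0
        rw [Real.mul_rpow (by norm_num) ht0.le] at h2
        nlinarith [Real.rpow_nonneg ht0.le c, Real.rpow_nonneg (by norm_num : (0:ℝ) ≤ 2) c]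
    calc Real.exp (-(z*t)) * t ^ (a-1) * (1+t) ^ (b-a-1)
        ≤ Real.exp (-(z*t)) * t ^ (a-1) * ((2:ℝ) ^ c * (1 + t ^ c)) := by
          apply mul_le_mul_of_nonneg_left hpow (by positivity)
      _ = (2:ℝ) ^ c * (Real.exp (-(z*t)) * t ^ (a-1) + Real.exp (-(z*t)) * (t ^ (a-1) * t ^ c)) := by
          ring
      _ = (2:ℝ) ^ c * (Real.exp (-(z*t)) * t ^ (a-1) + Real.exp (-(z*t)) * t ^ (a-1+c)) := by
          rw [← Real.rpow_add ht0]
  -- pointwise derivative bound helper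
  have hptbd : ∀ w : ℝ, z/2 ≤ w → ∀ t ∈ Ioi (0:ℝ),
      ‖Real.exp (-(w*t)) * -t * t ^ (a-1) * (1+t) ^ (b-a-1)‖
        ≤ Real.exp (-(w*t)) * (1+t) ^ (b-1) := by
    intro w hw t ht
    have ht0 : (0:ℝ) < t := ht
    have h1t : (0:ℝ) < 1 + t := by linarith
    rw [show Real.exp (-(w*t)) * -t * t ^ (a-1) * (1+t) ^ (b-a-1)
        = -(Real.exp (-(w*t)) * (t * t ^ (a-1)) * (1+t) ^ (b-a-1)) by ring]
    rw [norm_neg, Real.norm_eq_abs, abs_of_nonneg (by positivity)]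
    have hta : t * t ^ (a-1) = t ^ a := by
      rw [mul_comm, ← Real.rpow_add_one ht0.ne']
      norm_num
    rw [hta]
    have h1 : t ^ a ≤ (1+t) ^ a := Real.rpow_le_rpow ht0.le (by linarith) ha.le
    calc Real.exp (-(w*t)) * t ^ a * (1+t) ^ (b-a-1)
        ≤ Real.exp (-(w*t)) * (1+t) ^ a * (1+t) ^ (b-a-1) := by
          apply mul_le_mul_of_nonneg_right (mul_le_mul_of_nonneg_left h1 (by positivity))
            (by positivity)
      _ = Real.exp (-(w*t)) * (1+t) ^ (b-1) := by
          rw [mul_assoc, ← Real.rpow_add h1t]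
          congr 1
          ring
  -- the dominated convergence derivative theorem
  have hball : ∀ w : ℝ, w ∈ Metric.ball z (z/2) → z/2 ≤ w := by
    intro w hw
    rw [Metric.mem_ball, Real.dist_eq, abs_sub_lt_iff] at hw
    linarith [hw.2]
  have key := hasDerivAt_integral_of_dominated_loc_of_deriv_le
    (F := fun w t => Real.exp (-(w*t)) * t ^ (a-1) * (1+t) ^ (b-a-1))
    (F' := fun w t => Real.exp (-(w*t)) * -t * t ^ (a-1) * (1+t) ^ (b-a-1))
    (x₀ := z) (s := Metric.ball z (z/2))
    (bound := fun t => Real.exp (-(z/2*t)) * (1+t) ^ (b-1))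
    (Metric.ball_mem_nhds z (by linarith))
    (Filter.Eventually.of_forall hmeas) hFint hmeas'
    ?_ (shifted_integrable (by linarith) (by linarith)) ?_
  · obtain ⟨hF'int, hderiv⟩ := key
    refine ⟨hderiv.differentiableAt, ?_⟩
    rw [hderiv.deriv]
    rw [← Real.norm_eq_abs]
    have hb1 : Real.Gamma b * Real.exp z * z ^ (-b)
        = Real.exp z * ((1/z) ^ ((b-1)+1) * Real.Gamma ((b-1)+1)) := by
      rw [show (b-1)+1 = b by ring]
      rw [one_div, Real.inv_rpow hz.le, ← Real.rpow_neg hz.le]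
      ring
    rw [hb1]
    refine le_trans (norm_integral_le_of_norm_le
      (shifted_integrable hz (by linarith)) ?_) (shifted_integral_le hz (by linarith))
    filter_upwards [ae_restrict_mem measurableSet_Ioi] with t ht
    exact hptbd z (by linarith) t ht
  · -- bound
    filter_upwards [ae_restrict_mem measurableSet_Ioi] with t ht
    intro w hw
    have hwz := hball w hw
    have ht0 : (0:ℝ) < t := ht
    refine (hptbd w hwz t ht).trans ?_
    apply mul_le_mul_of_nonneg_right _ (by positivity)
    apply Real.exp_le_exp.mpr
    nlinarith
  · -- differentiability
    filter_upwards [ae_restrict_mem measurableSet_Ioi] with t _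
    intro w _
    have h1 : HasDerivAt (fun w : ℝ => w * t) t w := hasDerivAt_mul_const t
    have h2 : HasDerivAt (fun w : ℝ => Real.exp (-(w*t))) (Real.exp (-(w*t)) * -t) w :=
      h1.neg.exp
    exact (h2.mul_const _).mul_const _
end

section
/- Fix z > 0 and a real α ≠ 0, and let λ ∈ ℝ satisfy λ ≤ (3/4)α²; set κ = √(α² − λ). Then for every m ∈ ℤ and every j ∈ {0,1} one has |M(1/2 + j + |m| + mα/κ, 1 + j + 2|m|, z)| ≤ e^{2z}. -/
open scoped Real

noncomputable section

/-- The Pochhammer symbol `(a)ₙ = a (a+1) ⋯ (a+n−1)`. -/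
noncomputable def poch (a : ℝ) (n : ℕ) : ℝ := ∏ k ∈ Finset.range n, (a + k)

/-- The Kummer confluent hypergeometric function `M(a,b,z)`. -/
noncomputable def kummerM (a b z : ℝ) : ℝ :=
  ∑' n : ℕ, (poch a n / poch b n) * z ^ n / (n.factorial : ℝ)

lemma kummer_bound (a b z : ℝ) (hz : 0 < z)
    (hab : ∀ k : ℕ, |a + k| ≤ 2 * (b + k)) (hb : 0 < b) :
    |kummerM a b z| ≤ Real.exp (2*z) := by
  have hbk : ∀ k : ℕ, (0:ℝ) < b + k := fun k => by positivity
  have hpb : ∀ n, 0 < poch b n := fun n => Finset.prod_pos fun k _ => hbk k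
  have key : ∀ n : ℕ, ‖(poch a n / poch b n) * z ^ n / (n.factorial : ℝ)‖
      ≤ (2*z) ^ n / (n.factorial : ℝ) := by
    intro n
    have hpa : |poch a n| ≤ 2 ^ n * poch b n := by
      rw [poch, Finset.abs_prod]
      calc ∏ k ∈ Finset.range n, |a + k| ≤ ∏ k ∈ Finset.range n, 2 * (b + k) :=
            Finset.prod_le_prod (fun k _ => abs_nonneg _) (fun k _ => hab k)
        _ = 2 ^ n * poch b n := by
            rw [Finset.prod_mul_distrib, Finset.prod_const, Finset.card_range, poch]
    rw [Real.norm_eq_abs, abs_div, abs_mul, abs_div, abs_of_pos (hpb n),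
      abs_of_pos (pow_pos hz n), Nat.abs_cast, mul_pow]
    have hfac : (0:ℝ) < (n.factorial : ℝ) := by positivity
    apply div_le_div_of_nonneg_right _ hfac.le
    rw [div_mul_eq_mul_div]
    rw [div_le_iff₀ (hpb n)]
    calc |poch a n| * z ^ n ≤ (2 ^ n * poch b n) * z ^ n :=
          mul_le_mul_of_nonneg_right hpa (by positivity)
      _ = 2 ^ n * z ^ n * poch b n := by ring
  have hsum : HasSum (fun n : ℕ => (2*z) ^ n / (n.factorial : ℝ)) (Real.exp (2*z)) := by
    rw [Real.exp_eq_exp_ℝ]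
    exact NormedSpace.expSeries_div_hasSum_exp (2*z)
  exact tsum_of_norm_bounded hsum key

theorem stmt4 (z α lam : ℝ) (hz : 0 < z) (hα : α ≠ 0) (hlam : lam ≤ 3/4 * α^2) :
    ∀ m : ℤ, ∀ j : ℕ, j ≤ 1 →
      |kummerM (1/2 + (j:ℝ) + (m.natAbs:ℝ) + (m:ℝ) * α / Real.sqrt (α^2 - lam))
          (1 + (j:ℝ) + 2 * (m.natAbs:ℝ)) z| ≤ Real.exp (2*z) := by
  intro m j hj
  set κ := Real.sqrt (α^2 - lam) with hκdef
  have hα2 : 0 < α ^ 2 := by positivity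
  have hκpos : 0 < κ := Real.sqrt_pos.mpr (by nlinarith)
  have hκsq : κ ^ 2 = α ^ 2 - lam := Real.sq_sqrt (by nlinarith)
  have habs : |(m:ℝ) * α / κ| ≤ 2 * (m.natAbs : ℝ) := by
    rw [abs_div, abs_mul, abs_of_pos hκpos, div_le_iff₀ hκpos]
    have h1 : |(m:ℝ)| = (m.natAbs : ℝ) := by
      rw [← Int.cast_abs, Int.abs_eq_natAbs, Int.cast_natCast]
    rw [h1]
    have h2 : |α| ≤ 2 * κ := by
      have : α ^ 2 ≤ (2 * κ) ^ 2 := by nlinarith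
      nlinarith [abs_nonneg α, sq_abs α, hκpos]
    nlinarith [Nat.cast_nonneg (α := ℝ) m.natAbs, abs_nonneg α]
  apply kummer_bound _ _ _ hz _ (by positivity)
  intro k
  rw [abs_le]
  have h1 := neg_abs_le ((m:ℝ) * α / κ)
  have h2 := le_abs_self ((m:ℝ) * α / κ)
  have h3 : (0:ℝ) ≤ (m.natAbs:ℝ) := Nat.cast_nonneg _
  have h4 : (0:ℝ) ≤ (j:ℝ) := Nat.cast_nonneg _
  have h5 : (0:ℝ) ≤ (k:ℝ) := Nat.cast_nonneg _
  constructor <;> nlinarith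
end
end

section
/- Fix z > 0 and α > 0. There exist λ_c ∈ (0, (3/4)α²] and m_c ∈ ℕ such that for every λ ∈ (0, λ_c) and every m ∈ ℤ with |m| ≥ m_c, writing κ = √(α² − λ), one has M(1/2 + |m| + mα/κ, 1 + 2|m|, z) ≥ 1/2. -/
open scoped Real

set_option maxHeartbeats 1000000

noncomputable section

lemma poch_pos {b : ℝ} (hb : 0 < b) (n : ℕ) : 0 < poch b n :=
  Finset.prod_pos fun k _ => by positivity

lemma poch_nonneg {a : ℝ} (ha : 0 ≤ a) (n : ℕ) : 0 ≤ poch a n :=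
  Finset.prod_nonneg fun k _ => by positivity

lemma abs_poch_le (a : ℝ) (n : ℕ) : |poch a n| ≤ poch |a| n := by
  rw [poch, Finset.abs_prod]
  refine Finset.prod_le_prod (fun k _ => abs_nonneg _) (fun k _ => ?_)
  calc |a + (k:ℝ)| ≤ |a| + |(k:ℝ)| := abs_add_le _ _
    _ = |a| + k := by rw [Nat.abs_cast]

lemma poch_le_poch {a b : ℝ} (ha : 0 ≤ a) (hab : a ≤ b) (n : ℕ) : poch a n ≤ poch b n :=
  Finset.prod_le_prod (fun k _ => by positivity) (fun k _ => by linarith)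

lemma poch_le_pow_mul {a b M : ℝ} (ha : 0 ≤ a) (hb : 0 < b) (hM1 : 1 ≤ M) (hM : a ≤ M * b) (n : ℕ) :
    poch a n ≤ M ^ n * poch b n := by
  have h : M ^ n * poch b n = ∏ k ∈ Finset.range n, (M * (b + k)) := by
    rw [Finset.prod_mul_distrib, Finset.prod_const, poch, Finset.card_range]
  rw [h]
  refine Finset.prod_le_prod (fun k _ => by positivity) (fun k _ => ?_)
  have hk : (k:ℝ) ≤ M * k := le_mul_of_one_le_left (by positivity) hM1
  nlinarith

lemma poch_succ (a : ℝ) (n : ℕ) : poch a (n+1) = a * poch (a+1) n := by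
  rw [poch, Finset.prod_range_succ', poch]
  simp only [Nat.cast_zero, Nat.cast_add, Nat.cast_one, add_zero]
  rw [mul_comm]
  exact congrArg _ (Finset.prod_congr rfl fun k _ => by ring)

lemma poch_mul_le {a b : ℝ} (ha : 0 ≤ a) (hab : a ≤ b) (n : ℕ) :
    poch a (n+1) * b ≤ a * poch b (n+1) := by
  have hb : 0 ≤ b := ha.trans hab
  rw [poch_succ, poch_succ]
  have h := poch_le_poch (a := a+1) (b := b+1) (by linarith) (by linarith) n
  have h0 := poch_nonneg (a := a+1) (show (0:ℝ) ≤ a+1 by linarith) n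
  nlinarith [mul_le_mul_of_nonneg_left h (mul_nonneg ha hb)]

theorem stmt5 (z α : ℝ) (hz : 0 < z) (hα : 0 < α) :
    ∃ lamc : ℝ, 0 < lamc ∧ lamc ≤ 3/4 * α^2 ∧ ∃ mc : ℕ,
      ∀ lam : ℝ, 0 < lam → lam < lamc → ∀ m : ℤ, mc ≤ m.natAbs →
        1/2 ≤ kummerM (1/2 + (m.natAbs:ℝ) + (m:ℝ) * α / Real.sqrt (α^2 - lam))
            (1 + 2 * (m.natAbs:ℝ)) z := by
  have hfac : ∀ n : ℕ, (0:ℝ) < (n.factorial : ℝ) := fun n => by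
    exact_mod_cast n.factorial_pos
  have hEsum0 : Summable (fun n : ℕ => z ^ n / (n.factorial : ℝ)) :=
    Real.summable_pow_div_factorial z
  set E : ℝ := ∑' n : ℕ, z ^ (n+1) / ((n+1).factorial : ℝ) with hEdef
  have hgsum : Summable (fun n : ℕ => z ^ (n+1) / ((n+1).factorial : ℝ)) :=
    (summable_nat_add_iff 1).2 hEsum0
  have hE0 : 0 ≤ E := tsum_nonneg (fun n => by positivity)
  set δ : ℝ := min 1 (1 / (2 * (E + 1))) with hδdef
  have hδ0 : 0 < δ := lt_min one_pos (by positivity)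
  have hδ1 : δ ≤ 1 := min_le_left _ _
  have hδE : δ * E ≤ 1/2 := by
    have h1 : δ ≤ 1 / (2 * (E + 1)) := min_le_right _ _
    have h2 : δ * (2 * (E + 1)) ≤ 1 := by
      rw [le_div_iff₀ (by positivity)] at h1; linarith
    nlinarith
  refine ⟨α^2 * δ / 2, by positivity, by nlinarith [sq_nonneg α], max 1 ⌈1 / (2*δ)⌉₊, ?_⟩
  intro lam hlam0 hlamlt m hm
  set N : ℕ := m.natAbs with hNdef
  have hN1 : 1 ≤ (N:ℝ) := by
    have : 1 ≤ N := le_trans (le_max_left _ _) hm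
    exact_mod_cast this
  have hNδ : 1 ≤ 2 * δ * (N:ℝ) := by
    have h1 : ⌈1 / (2*δ)⌉₊ ≤ N := le_trans (le_max_right _ _) hm
    have h2 : 1 / (2*δ) ≤ (N:ℝ) := le_trans (Nat.le_ceil _) (by exact_mod_cast h1)
    rw [div_le_iff₀ (by positivity)] at h2
    nlinarith
  set κ : ℝ := Real.sqrt (α^2 - lam) with hκdef
  have hlamα : lam < α^2 := by nlinarith
  have hκ2 : κ^2 = α^2 - lam := Real.sq_sqrt (by linarith)
  have hκ0 : 0 < κ := Real.sqrt_pos.2 (by linarith)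
  have hκα : κ ≤ α := by
    rw [hκdef]
    calc Real.sqrt (α^2 - lam) ≤ Real.sqrt (α^2) := Real.sqrt_le_sqrt (by linarith)
      _ = α := Real.sqrt_sq hα.le
  have hακ : α ≤ (1 + δ) * κ := by
    have hδ3 : 0 ≤ 3*δ/2 - δ^3/2 := by
      have hδδ : δ*δ ≤ 1 := mul_le_one₀ hδ1 hδ0.le hδ1
      nlinarith [mul_le_mul_of_nonneg_left hδδ hδ0.le]
    have hkey : α^2 ≤ (1 + δ)^2 * (α^2 - lam) := by
      nlinarith [mul_lt_mul_of_pos_right hlamlt (show (0:ℝ) < 1 + 2*δ + δ^2 by positivity),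
        mul_nonneg (sq_nonneg α) hδ3]
    have h1 : α^2 ≤ ((1 + δ) * κ)^2 := by rw [mul_pow, hκ2]; linarith
    calc α = Real.sqrt (α^2) := (Real.sqrt_sq hα.le).symm
      _ ≤ Real.sqrt (((1 + δ) * κ)^2) := Real.sqrt_le_sqrt h1
      _ = (1 + δ) * κ := Real.sqrt_sq (by positivity)
  set r : ℝ := α / κ with hrdef
  have hr1 : 1 ≤ r := (one_le_div hκ0).2 hκα
  have hr2 : r ≤ 1 + δ := (div_le_iff₀ hκ0).2 hακ
  set a : ℝ := 1/2 + (N:ℝ) + (m:ℝ) * α / κ with hadef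
  set b : ℝ := 1 + 2 * (N:ℝ) with hbdef
  have hb : 0 < b := by rw [hbdef]; linarith
  set f : ℕ → ℝ := fun n => poch a n / poch b n * z ^ n / (n.factorial : ℝ) with hfdef
  have hf0 : f 0 = 1 := by simp [hfdef, poch]
  have hgoal : kummerM a b z = ∑' n, f n := rfl
  show 1/2 ≤ kummerM a b z
  rw [hgoal]
  have hm0 : m ≠ 0 := by
    intro h; rw [h] at hNdef; simp [hNdef] at hN1; linarith
  rcases lt_or_gt_of_ne hm0 with hmneg | hmpos
  · -- m < 0 : a = 1/2 + N - N * r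
    have hmcast : (m:ℝ) = -(N:ℝ) := by
      have h1 : m = -(N:ℤ) := by rw [hNdef]; omega
      rw [h1]; push_cast; ring
    have haval : a = 1/2 + (N:ℝ) - (N:ℝ) * r := by
      rw [hadef, hmcast, hrdef]; ring
    have hNr1 : (N:ℝ) * 1 ≤ (N:ℝ) * r := by
      apply mul_le_mul_of_nonneg_left hr1 (by linarith)
    have hNr2 : (N:ℝ) * r ≤ (N:ℝ) * (1 + δ) := by
      apply mul_le_mul_of_nonneg_left hr2 (by linarith)
    have habs : |a| ≤ δ * b := by
      rw [abs_le, haval, hbdef]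
      constructor <;> nlinarith
    have hab : |a| ≤ b := le_trans habs (by nlinarith)
    -- pointwise tail bound
    have htail : ∀ n : ℕ, |f (n+1)| ≤ δ * (z ^ (n+1) / ((n+1).factorial : ℝ)) := by
      intro n
      have hq : 0 < poch b (n+1) := poch_pos hb _
      have h1 : |poch a (n+1)| ≤ δ * poch b (n+1) := by
        refine le_trans (abs_poch_le a (n+1)) ?_
        have key : poch |a| (n+1) * b ≤ |a| * poch b (n+1) :=
          poch_mul_le (abs_nonneg a) hab n
        have key2 : |a| * poch b (n+1) ≤ δ * b * poch b (n+1) :=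
          mul_le_mul_of_nonneg_right habs hq.le
        have h3 : poch |a| (n+1) * b ≤ (δ * poch b (n+1)) * b := by
          calc poch |a| (n+1) * b ≤ δ * b * poch b (n+1) := le_trans key key2
            _ = (δ * poch b (n+1)) * b := by ring
        exact le_of_mul_le_mul_right h3 hb
      have hfeq : |f (n+1)| = |poch a (n+1)| / poch b (n+1) * (z ^ (n+1) / ((n+1).factorial : ℝ)) := by
        rw [hfdef]
        rw [abs_div, abs_mul, abs_div, abs_of_pos hq, abs_of_pos (pow_pos hz _),
          abs_of_pos (hfac _)]
        ring
      rw [hfeq]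
      have h2 : |poch a (n+1)| / poch b (n+1) ≤ δ := by
        rw [div_le_iff₀ hq]; linarith
      exact mul_le_mul_of_nonneg_right h2 (by positivity)
    have habsf : ∀ n : ℕ, |f n| ≤ z ^ n / (n.factorial : ℝ) := by
      intro n
      cases n with
      | zero => rw [hf0]; norm_num
      | succ n =>
        refine le_trans (htail n) ?_
        nlinarith [pow_pos hz (n+1), hfac (n+1), htail n,
          div_pos (pow_pos hz (n+1)) (hfac (n+1))]
    have hsum : Summable f :=
      Summable.of_abs (Summable.of_nonneg_of_le (fun n => abs_nonneg _) habsf hEsum0)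
    have hsumshift : Summable (fun n => f (n+1)) := (summable_nat_add_iff 1).2 hsum
    have hsplit : ∑' n, f n = f 0 + ∑' n, f (n+1) := Summable.tsum_eq_zero_add hsum
    rw [hsplit, hf0]
    have hT : -(δ * E) ≤ ∑' n, f (n+1) := by
      have h1 : ∑' n : ℕ, (-(δ * (z ^ (n+1) / ((n+1).factorial : ℝ)))) ≤ ∑' n, f (n+1) := by
        refine Summable.tsum_le_tsum (fun n => ?_) ((hgsum.mul_left δ).neg) hsumshift
        have := (abs_le.1 (htail n)).1
        linarith
      have h2 : ∑' n : ℕ, (-(δ * (z ^ (n+1) / ((n+1).factorial : ℝ)))) = -(δ * E) := by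
        rw [tsum_neg, tsum_mul_left]
      linarith [h1, h2.symm.le]
    linarith
  · -- m > 0 : all terms nonnegative
    have hmcast : (m:ℝ) = (N:ℝ) := by
      have h1 : m = (N:ℤ) := by rw [hNdef]; omega
      rw [h1]; push_cast; ring
    have ha0 : 0 ≤ a := by
      rw [hadef, hmcast]
      have : 0 ≤ (N:ℝ) * α / κ := by positivity
      linarith
    have hfnn : ∀ n, 0 ≤ f n := fun n => by
      rw [hfdef]
      have := poch_nonneg ha0 n
      have := (poch_pos hb n)
      positivity
    set M : ℝ := max (a / b) 1 with hMdef
    have hM1 : 1 ≤ M := le_max_right _ _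
    have hMa : a ≤ M * b := by
      calc a = (a / b) * b := by field_simp
        _ ≤ M * b := mul_le_mul_of_nonneg_right (le_max_left _ _) hb.le
    have hle : ∀ n, f n ≤ (M * z) ^ n / (n.factorial : ℝ) := by
      intro n
      have hp := poch_le_pow_mul ha0 hb hM1 hMa n
      have hq : 0 < poch b n := poch_pos hb n
      have h1 : poch a n / poch b n ≤ M ^ n := by
        rw [div_le_iff₀ hq]; linarith
      rw [hfdef, mul_pow]
      have h2 : poch a n / poch b n * z ^ n ≤ M ^ n * z ^ n :=
        mul_le_mul_of_nonneg_right h1 (by positivity)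
      exact (div_le_div_iff_of_pos_right (hfac n)).2 h2
    have hsum : Summable f :=
      Summable.of_nonneg_of_le hfnn hle (Real.summable_pow_div_factorial (M * z))
    have h1 : f 0 ≤ ∑' n, f n := Summable.le_tsum hsum 0 (fun j _ => hfnn j)
    rw [hf0] at h1
    linarith
end
end

section
/- Let a > 0. There exists a constant C > 0, depending only on a, such that for all b > 1 and z > 0 the function a' ↦ ∫₀^∞ e^{-zt} t^{a'-1}(1+t)^{b-a'-1} dt is differentiable at a' = a, and the absolute value of its derivative there is at most C (2^{b-a-1} + e^z z^{1-b} Γ(b−1)). -/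
open scoped Real
open MeasureTheory Set

private lemma auxF_le (a b z a' t : ℝ) (ha : 0 < a) (hb : 1 < b) (hz : 0 < z)
    (hlo : 3*a/4 ≤ a') (ht : 0 < t) :
    Real.exp (-(z*t)) * t ^ (a'-1) * (1+t) ^ (b-a'-1) ≤
      (if t ≤ 1 then (2:ℝ)^a * 2^(b-a-1) * t^(3*a/4-1)
        else 2 * Real.exp (-(z*t)) * (1+t)^(b-2)) := by
  have h1t : (0:ℝ) < 1 + t := by linarith
  have ha'pos : 0 < a' := by linarith
  split_ifs with h1
  · have e1 : Real.exp (-(z*t)) ≤ 1 := Real.exp_le_one_iff.2 (by nlinarith)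
    have e2 : t ^ (a'-1) ≤ t ^ (3*a/4-1) :=
      Real.rpow_le_rpow_of_exponent_ge ht h1 (by linarith)
    have e3 : (1+t) ^ (b-a'-1) ≤ (2:ℝ) ^ (b-1) := by
      rcases le_or_gt 0 (b-a'-1) with h | h
      · calc (1+t) ^ (b-a'-1) ≤ (2:ℝ) ^ (b-a'-1) :=
              Real.rpow_le_rpow (by linarith) (by linarith) h
          _ ≤ (2:ℝ) ^ (b-1) :=
              Real.rpow_le_rpow_of_exponent_le one_le_two (by linarith)
      · calc (1+t) ^ (b-a'-1) ≤ 1 :=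
              Real.rpow_le_one_of_one_le_of_nonpos (by linarith) h.le
          _ ≤ (2:ℝ) ^ (b-1) := Real.one_le_rpow one_le_two (by linarith)
    have e4 : (2:ℝ) ^ (b-1) = 2 ^ a * 2 ^ (b-a-1) := by
      rw [← Real.rpow_add two_pos]; ring_nf
    calc Real.exp (-(z*t)) * t ^ (a'-1) * (1+t) ^ (b-a'-1)
        ≤ 1 * t ^ (3*a/4-1) * (2:ℝ) ^ (b-1) := by
          apply mul_le_mul _ e3 (by positivity) (by positivity)
          exact mul_le_mul e1 e2 (by positivity) (by norm_num)
      _ = 2 ^ a * 2 ^ (b-a-1) * t ^ (3*a/4-1) := by rw [e4]; ring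
  · push_neg at h1
    have hr0 : 0 < t / (1+t) := by positivity
    have key : t ^ (a'-1) * (1+t) ^ (b-a'-1) ≤ 2 * (1+t) ^ (b-2) := by
      have hsplit : (1+t) ^ (b-a'-1) = (1+t) ^ (b-2) * (1+t) ^ (1-a') := by
        rw [← Real.rpow_add h1t]; ring_nf
      have hrepr : t ^ (a'-1) * (1+t) ^ (1-a') = (t/(1+t)) ^ (a'-1) := by
        rw [Real.div_rpow ht.le h1t.le, div_eq_mul_inv,
          show (1-a') = -(a'-1) by ring, Real.rpow_neg h1t.le]
      have hle2 : (t/(1+t)) ^ (a'-1) ≤ 2 := by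
        have h2r : 1/2 ≤ t/(1+t) := by rw [div_le_div_iff₀ (by norm_num) h1t]; linarith
        have hr1 : t/(1+t) ≤ 1 := by rw [div_le_one h1t]; linarith
        have h5 : (t/(1+t)) ^ a' ≤ 1 := Real.rpow_le_one hr0.le hr1 ha'pos.le
        calc (t/(1+t)) ^ (a'-1) = (t/(1+t)) ^ a' / (t/(1+t)) ^ (1:ℝ) :=
              Real.rpow_sub hr0 a' 1
          _ = (t/(1+t)) ^ a' / (t/(1+t)) := by rw [Real.rpow_one]
          _ ≤ 1 / (t/(1+t)) := by gcongr
          _ ≤ 2 := by rw [div_le_iff₀ hr0]; nlinarith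
      calc t ^ (a'-1) * (1+t) ^ (b-a'-1)
          = (1+t) ^ (b-2) * ((t/(1+t)) ^ (a'-1)) := by rw [hsplit, ← hrepr]; ring
        _ ≤ (1+t) ^ (b-2) * 2 := mul_le_mul_of_nonneg_left hle2 (by positivity)
        _ = 2 * (1+t) ^ (b-2) := mul_comm _ _
    calc Real.exp (-(z*t)) * t ^ (a'-1) * (1+t) ^ (b-a'-1)
        = Real.exp (-(z*t)) * (t ^ (a'-1) * (1+t) ^ (b-a'-1)) := mul_assoc _ _ _
      _ ≤ Real.exp (-(z*t)) * (2 * (1+t) ^ (b-2)) :=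
          mul_le_mul_of_nonneg_left key (Real.exp_pos _).le
      _ = 2 * Real.exp (-(z*t)) * (1+t) ^ (b-2) := by ring

private lemma auxlog_le (a t : ℝ) (ha : 0 < a) (ht : 0 < t) :
    Real.log (1+t) - Real.log t ≤
      (if t ≤ 1 then (1 + Real.log 2 + 4/a) * t ^ (-(a/4)) else 1) := by
  split_ifs with h1
  · have l1 : Real.log (1+t) ≤ Real.log 2 := Real.log_le_log (by linarith) (by linarith)
    have l2 : -Real.log t ≤ (4/a) * t ^ (-(a/4)) := by
      have h0 : 0 < t⁻¹ := by positivity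
      have h3 : Real.log ((t⁻¹) ^ (a/4)) ≤ (t⁻¹)^(a/4) - 1 :=
        Real.log_le_sub_one_of_pos (by positivity)
      rw [Real.log_rpow h0, Real.log_inv] at h3
      have h4 : (t⁻¹)^(a/4) = t ^ (-(a/4)) := by
        rw [Real.inv_rpow ht.le, ← Real.rpow_neg ht.le]
      rw [h4] at h3
      have h5 : (0:ℝ) < 4/a := by positivity
      have h6 := mul_le_mul_of_nonneg_left h3 h5.le
      rw [show (4/a) * (a/4 * -Real.log t) = -Real.log t from by field_simp] at h6
      nlinarith
    have l3 : 1 ≤ t ^ (-(a/4)) :=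
      Real.one_le_rpow_of_pos_of_le_one_of_nonpos ht h1 (by linarith)
    have l4 : 0 ≤ Real.log 2 := Real.log_nonneg one_le_two
    nlinarith [mul_nonneg l4 (by linarith : (0:ℝ) ≤ t ^ (-(a/4)) - 1),
      mul_nonneg (by positivity : (0:ℝ) ≤ 4/a) (by linarith : (0:ℝ) ≤ t ^ (-(a/4)) - 1)]
  · push_neg at h1
    have h2 : Real.log (1+t) ≤ Real.log (2*t) := Real.log_le_log (by linarith) (by linarith)
    rw [Real.log_mul two_ne_zero (ne_of_gt ht)] at h2
    have := Real.log_two_lt_d9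
    linarith

theorem stmt7 (a : ℝ) (ha : 0 < a) :
    ∃ C : ℝ, 0 < C ∧ ∀ b z : ℝ, 1 < b → 0 < z →
      DifferentiableAt ℝ (fun a' : ℝ =>
        ∫ t in Set.Ioi (0:ℝ), Real.exp (-(z*t)) * t ^ (a'-1) * (1+t) ^ (b-a'-1)) a ∧
      |deriv (fun a' : ℝ =>
          ∫ t in Set.Ioi (0:ℝ), Real.exp (-(z*t)) * t ^ (a'-1) * (1+t) ^ (b-a'-1)) a| ≤
        C * ((2:ℝ) ^ (b-a-1) + Real.exp z * z ^ (1-b) * Real.Gamma (b-1)) := by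
  have hlog2 : (0:ℝ) ≤ Real.log 2 := Real.log_nonneg one_le_two
  set K : ℝ := (2:ℝ)^a * (1 + Real.log 2 + 4/a) with hK
  have hKpos : 0 < K := by
    apply mul_pos (Real.rpow_pos_of_pos two_pos a)
    have : (0:ℝ) < 4/a := by positivity
    linarith
  have hCpos : 0 < K * (2/a) + 2 := by
    have : 0 < K * (2/a) := mul_pos hKpos (by positivity)
    linarith
  refine ⟨K * (2/a) + 2, hCpos, fun b z hb hz => ?_⟩
  have hb1 : (0:ℝ) < b - 1 := by linarith
  have hε : (0:ℝ) < a/4 := by positivity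
  set bound : ℝ → ℝ := fun t => if t ≤ 1 then K * 2^(b-a-1) * t^(a/2-1)
      else 2 * Real.exp (-(z*t)) * (1+t)^(b-2) with hbound
  -- continuity / measurability
  have hcont : ∀ a' : ℝ, ContinuousOn
      (fun t : ℝ => Real.exp (-(z*t)) * t ^ (a'-1) * (1+t) ^ (b-a'-1)) (Ioi 0) := by
    intro a'
    have c1 : ContinuousOn (fun t : ℝ => Real.exp (-(z*t))) (Ioi 0) := by fun_prop
    have c2 : ContinuousOn (fun t : ℝ => t ^ (a'-1)) (Ioi 0) :=
      ContinuousOn.rpow_const continuousOn_id (fun x hx => Or.inl (ne_of_gt hx))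
    have c3 : ContinuousOn (fun t : ℝ => (1+t) ^ (b-a'-1)) (Ioi 0) :=
      ContinuousOn.rpow_const (by fun_prop)
        (fun x hx => Or.inl (by have hx' : (0:ℝ) < x := hx; positivity))
    exact (c1.mul c2).mul c3
  have hmeas : ∀ a' : ℝ, AEStronglyMeasurable
      (fun t : ℝ => Real.exp (-(z*t)) * t ^ (a'-1) * (1+t) ^ (b-a'-1))
      (volume.restrict (Ioi 0)) :=
    fun a' => (hcont a').aestronglyMeasurable measurableSet_Ioi
  have hcont' : ContinuousOn (fun t : ℝ => Real.exp (-(z*t)) * t ^ (a-1) * (1+t) ^ (b-a-1)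
      * (Real.log t - Real.log (1+t))) (Ioi 0) := by
    apply (hcont a).mul
    apply ContinuousOn.sub
    · exact ContinuousOn.log continuousOn_id (fun x hx => ne_of_gt hx)
    · exact ContinuousOn.log (by fun_prop)
        (fun x hx => by have hx' : (0:ℝ) < x := hx; positivity)
  -- integrability of the dominating function
  have hg_int : IntegrableOn (fun u : ℝ => u ^ (b-2) * Real.exp (-(z*u))) (Ioi 0) := by
    have h := integrableOn_rpow_mul_exp_neg_mul_rpow (by linarith : (-1:ℝ) < b-2) zero_lt_one hz
    refine h.congr_fun (fun x hx => ?_) measurableSet_Ioi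
    simp only [Real.rpow_one, neg_mul]
  have hmp : MeasurePreserving (fun x : ℝ => x + 1) volume volume :=
    measurePreserving_add_right volume 1
  have hme : MeasurableEmbedding (fun x : ℝ => x + 1) :=
    measurableEmbedding_addRight 1
  have hpre : (fun x : ℝ => x + 1) ⁻¹' (Ioi 2) = Ioi 1 := by
    ext x
    simp only [mem_preimage, mem_Ioi]
    constructor <;> intro h <;> linarith
  have hshift_int : IntegrableOn
      (fun t : ℝ => (t+1) ^ (b-2) * Real.exp (-(z*(t+1)))) (Ioi 1) := by
    have h2 : IntegrableOn (fun u : ℝ => u ^ (b-2) * Real.exp (-(z*u))) (Ioi 2) :=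
      hg_int.mono_set (Ioi_subset_Ioi (by norm_num))
    have h3 := ((hmp.restrict_preimage_emb hme (Ioi 2)).integrable_comp_emb hme).2 h2
    rw [hpre] at h3
    exact h3
  have hbd_int1 : IntegrableOn bound (Ioc 0 1) := by
    have h1 : IntegrableOn (fun t : ℝ => t ^ (a/2-1)) (Ioc 0 1) := by
      have h := intervalIntegral.intervalIntegrable_rpow' (a := 0) (b := 1)
        (r := a/2-1) (by linarith)
      rwa [intervalIntegrable_iff_integrableOn_Ioc_of_le zero_le_one] at h
    refine IntegrableOn.congr_fun (h1.const_mul (K * 2^(b-a-1))) (fun t ht => ?_) measurableSet_Ioc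
    simp only [hbound]
    rw [if_pos ht.2]
  have hbd_int2 : IntegrableOn bound (Ioi 1) := by
    refine IntegrableOn.congr_fun (hshift_int.const_mul (2 * Real.exp z)) (fun t ht => ?_) measurableSet_Ioi
    have ht1 : (1:ℝ) < t := ht
    simp only [hbound]
    rw [if_neg (by linarith)]
    have hexp : Real.exp z * Real.exp (-(z*(t+1))) = Real.exp (-(z*t)) := by
      rw [← Real.exp_add]; ring_nf
    rw [show (1:ℝ)+t = t+1 from by ring, ← hexp]; ring
  have hbd_int : Integrable bound (volume.restrict (Ioi 0)) := by
    have h := hbd_int1.union hbd_int2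
    rwa [Ioc_union_Ioi_eq_Ioi zero_le_one] at h
  -- the uniform bound on the derivative
  have h_bound : ∀ᵐ t ∂(volume.restrict (Ioi 0)), ∀ a' ∈ Metric.ball a (a/4),
      ‖Real.exp (-(z*t)) * t ^ (a'-1) * (1+t) ^ (b-a'-1)
        * (Real.log t - Real.log (1+t))‖ ≤ bound t := by
    refine Filter.eventually_of_mem (self_mem_ae_restrict measurableSet_Ioi)
      (fun t ht a' ha' => ?_)
    have ht' : (0:ℝ) < t := ht
    have hlo : 3*a/4 ≤ a' := by
      have h := Metric.mem_ball.1 ha'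
      rw [Real.dist_eq, abs_sub_lt_iff] at h
      linarith [h.1, h.2]
    have hFpos : 0 ≤ Real.exp (-(z*t)) * t ^ (a'-1) * (1+t) ^ (b-a'-1) := by positivity
    have hlogpos : 0 ≤ Real.log (1+t) - Real.log t :=
      sub_nonneg.2 (Real.log_le_log ht' (by linarith))
    have hnorm : ‖Real.exp (-(z*t)) * t ^ (a'-1) * (1+t) ^ (b-a'-1)
        * (Real.log t - Real.log (1+t))‖
        = Real.exp (-(z*t)) * t ^ (a'-1) * (1+t) ^ (b-a'-1)
          * (Real.log (1+t) - Real.log t) := by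
      rw [Real.norm_eq_abs, abs_mul, abs_of_nonneg hFpos, abs_sub_comm,
        abs_of_nonneg hlogpos]
    rw [hnorm]
    have hF := auxF_le a b z a' t ha hb hz hlo ht'
    have hL := auxlog_le a t ha ht'
    by_cases h1 : t ≤ 1
    · rw [if_pos h1] at hF hL
      simp only [hbound]
      rw [if_pos h1]
      have hrpow : t^(3*a/4-1) * t^(-(a/4)) = t^(a/2-1) := by
        rw [← Real.rpow_add ht', show 3*a/4-1 + -(a/4) = a/2-1 from by ring]
      calc Real.exp (-(z*t)) * t ^ (a'-1) * (1+t) ^ (b-a'-1)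
            * (Real.log (1+t) - Real.log t)
          ≤ ((2:ℝ)^a * 2^(b-a-1) * t^(3*a/4-1))
            * ((1 + Real.log 2 + 4/a) * t ^ (-(a/4))) :=
            mul_le_mul hF hL hlogpos (by positivity)
        _ = K * 2^(b-a-1) * (t^(3*a/4-1) * t^(-(a/4))) := by rw [hK]; ring
        _ = K * 2^(b-a-1) * t^(a/2-1) := by rw [hrpow]
    · rw [if_neg h1] at hF hL
      simp only [hbound]
      rw [if_neg h1]
      calc Real.exp (-(z*t)) * t ^ (a'-1) * (1+t) ^ (b-a'-1)
            * (Real.log (1+t) - Real.log t)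
          ≤ (2 * Real.exp (-(z*t)) * (1+t)^(b-2)) * 1 := by
            apply mul_le_mul hF hL hlogpos
            have : (0:ℝ) < 1 + t := by linarith
            positivity
        _ = 2 * Real.exp (-(z*t)) * (1+t)^(b-2) := mul_one _
  -- differentiability in the parameter
  have h_diff : ∀ᵐ t ∂(volume.restrict (Ioi 0)), ∀ a' ∈ Metric.ball a (a/4),
      HasDerivAt (fun y : ℝ => Real.exp (-(z*t)) * t ^ (y-1) * (1+t) ^ (b-y-1))
        (Real.exp (-(z*t)) * t ^ (a'-1) * (1+t) ^ (b-a'-1)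
          * (Real.log t - Real.log (1+t))) a' := by
    refine Filter.eventually_of_mem (self_mem_ae_restrict measurableSet_Ioi)
      (fun t ht a' _ => ?_)
    have ht' : (0:ℝ) < t := ht
    have h1t : (0:ℝ) < 1+t := by linarith
    have d1 : HasDerivAt (fun y : ℝ => t ^ (y-1)) (t ^ (a'-1) * Real.log t) a' := by
      have h := (Real.hasStrictDerivAt_const_rpow ht' (a'-1)).hasDerivAt
      have h2 : HasDerivAt (fun y : ℝ => y - 1) 1 a' := (hasDerivAt_id a').sub_const 1
      simpa [Function.comp_def] using h.comp a' h2
    have d2 : HasDerivAt (fun y : ℝ => (1+t) ^ (b-y-1))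
        (-((1+t) ^ (b-a'-1) * Real.log (1+t))) a' := by
      have h := (Real.hasStrictDerivAt_const_rpow h1t (b-a'-1)).hasDerivAt
      have h2 : HasDerivAt (fun y : ℝ => b - y - 1) (-1) a' := by
        simpa using ((hasDerivAt_const a' b).sub (hasDerivAt_id a')).sub_const 1
      have h3 := h.comp a' h2
      simpa [Function.comp_def] using h3
    have hmul := (d1.const_mul (Real.exp (-(z*t)))).mul d2
    refine hmul.congr_deriv ?_
    ring
  have hFint : Integrable (fun t : ℝ => Real.exp (-(z*t)) * t ^ (a-1) * (1+t) ^ (b-a-1))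
      (volume.restrict (Ioi 0)) := by
    apply Integrable.mono' hbd_int (hmeas a)
    refine Filter.eventually_of_mem (self_mem_ae_restrict measurableSet_Ioi) (fun t ht => ?_)
    have ht' : (0:ℝ) < t := ht
    have hF := auxF_le a b z a t ha hb hz (by linarith) ht'
    rw [Real.norm_eq_abs, abs_of_nonneg (by positivity)]
    by_cases h1 : t ≤ 1
    · rw [if_pos h1] at hF
      simp only [hbound]
      rw [if_pos h1]
      refine hF.trans ?_
      have e1 : t ^ (3*a/4-1) ≤ t ^ (a/2-1) :=
        Real.rpow_le_rpow_of_exponent_ge ht' h1 (by linarith)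
      have e2 : (2:ℝ)^a ≤ K := by
        rw [hK]
        nlinarith [Real.rpow_pos_of_pos two_pos a, (by positivity : (0:ℝ) < 4/a)]
      apply mul_le_mul (mul_le_mul e2 le_rfl (by positivity) hKpos.le) e1
        (by positivity) (by positivity)
    · rw [if_neg h1] at hF
      simp only [hbound]
      rw [if_neg h1]
      exact hF
  have main := hasDerivAt_integral_of_dominated_loc_of_deriv_le
    (F := fun a' t => Real.exp (-(z*t)) * t ^ (a'-1) * (1+t) ^ (b-a'-1))
    (F' := fun a' t => Real.exp (-(z*t)) * t ^ (a'-1) * (1+t) ^ (b-a'-1)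
      * (Real.log t - Real.log (1+t)))
    (x₀ := a) (bound := bound) (Metric.ball_mem_nhds a hε)
    (Filter.Eventually.of_forall hmeas) hFint
    (hcont'.aestronglyMeasurable measurableSet_Ioi)
    h_bound hbd_int h_diff
  obtain ⟨hF'int, hderiv⟩ := main
  constructor
  · exact hderiv.differentiableAt
  · rw [hderiv.deriv]
    have hle1 : |∫ t in Ioi (0:ℝ), Real.exp (-(z*t)) * t ^ (a-1) * (1+t) ^ (b-a-1)
        * (Real.log t - Real.log (1+t))| ≤ ∫ t in Ioi (0:ℝ), bound t := by
      rw [← Real.norm_eq_abs]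
      exact norm_integral_le_of_norm_le hbd_int
        (h_bound.mono fun t h => h a (Metric.mem_ball_self hε))
    refine hle1.trans ?_
    have hsplit : ∫ t in Ioi (0:ℝ), bound t
        = (∫ t in Ioc (0:ℝ) 1, bound t) + ∫ t in Ioi (1:ℝ), bound t := by
      rw [← setIntegral_union (Ioc_disjoint_Ioi le_rfl) measurableSet_Ioi hbd_int1 hbd_int2,
        Ioc_union_Ioi_eq_Ioi zero_le_one]
    have hI1 : ∫ t in Ioc (0:ℝ) 1, bound t = K * 2^(b-a-1) * (2/a) := by
      rw [setIntegral_congr_fun (g := fun t : ℝ => K * 2^(b-a-1) * t ^ (a/2-1))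
        measurableSet_Ioc (fun t ht => by simp only [hbound]; rw [if_pos ht.2]),
        integral_const_mul]
      have hval : ∫ t in Ioc (0:ℝ) 1, t ^ (a/2-1) = 2/a := by
        rw [← intervalIntegral.integral_of_le zero_le_one,
          integral_rpow (Or.inl (by linarith)),
          show a/2-1+1 = a/2 from by ring, Real.one_rpow,
          Real.zero_rpow (by positivity : a/2 ≠ 0)]
        field_simp
        norm_num
      rw [hval]
    have hI2 : ∫ t in Ioi (1:ℝ), bound t
        ≤ 2 * (Real.exp z * z ^ (1-b) * Real.Gamma (b-1)) := by
      have e1 : ∫ t in Ioi (1:ℝ), bound t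
          = 2 * Real.exp z * ∫ t in Ioi (1:ℝ), (t+1) ^ (b-2) * Real.exp (-(z*(t+1))) := by
        rw [← integral_const_mul]
        apply setIntegral_congr_fun measurableSet_Ioi
        intro t ht
        have ht1 : (1:ℝ) < t := ht
        simp only [hbound]
        rw [if_neg (by linarith)]
        have hexp : Real.exp z * Real.exp (-(z*(t+1))) = Real.exp (-(z*t)) := by
          rw [← Real.exp_add]; ring_nf
        rw [show (1:ℝ)+t = t+1 from by ring, ← hexp]; ring
      have e2 : ∫ t in Ioi (1:ℝ), (t+1) ^ (b-2) * Real.exp (-(z*(t+1)))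
          = ∫ u in Ioi (2:ℝ), u ^ (b-2) * Real.exp (-(z*u)) := by
        rw [← hpre]
        exact hmp.setIntegral_preimage_emb hme
          (fun u => u ^ (b-2) * Real.exp (-(z*u))) (Ioi 2)
      have e3 : ∫ u in Ioi (2:ℝ), u ^ (b-2) * Real.exp (-(z*u))
          ≤ ∫ u in Ioi (0:ℝ), u ^ (b-2) * Real.exp (-(z*u)) := by
        apply setIntegral_mono_set hg_int
        · refine Filter.eventually_of_mem (self_mem_ae_restrict measurableSet_Ioi)
            (fun u hu => ?_)
          have hu' : (0:ℝ) < u := hu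
          positivity
        · exact HasSubset.Subset.eventuallyLE (Ioi_subset_Ioi (by norm_num))
      have e4 : ∫ u in Ioi (0:ℝ), u ^ (b-2) * Real.exp (-(z*u))
          = z ^ (1-b) * Real.Gamma (b-1) := by
        have h := Real.integral_rpow_mul_exp_neg_mul_Ioi hb1 hz
        rw [show b-1-1 = b-2 from by ring] at h
        rw [h]
        congr 1
        rw [one_div, Real.inv_rpow hz.le, ← Real.rpow_neg hz.le,
          show -(b-1) = 1-b from by ring]
      rw [e1, e2]
      calc 2 * Real.exp z * ∫ u in Ioi (2:ℝ), u ^ (b-2) * Real.exp (-(z*u))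
          ≤ 2 * Real.exp z * (z ^ (1-b) * Real.Gamma (b-1)) := by
            apply mul_le_mul_of_nonneg_left (e3.trans_eq e4) (by positivity)
        _ = 2 * (Real.exp z * z ^ (1-b) * Real.Gamma (b-1)) := by ring
    have hX : (0:ℝ) < 2^(b-a-1) := Real.rpow_pos_of_pos two_pos _
    have hG : (0:ℝ) < Real.Gamma (b-1) := Real.Gamma_pos_of_pos hb1
    have hY : 0 ≤ Real.exp z * z^(1-b) * Real.Gamma (b-1) := by positivity
    rw [hsplit, hI1]
    have hKa : (0:ℝ) < K * (2/a) := mul_pos hKpos (by positivity)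
    nlinarith [hI2, mul_nonneg hKa.le hY, mul_pos hKa hX, hY, hX]
end

section
/- Fix α > 0. Then for every m ∈ ℤ and every r ∈ (0,1] one has |v_m(r)| ≤ e^{αr} (2αr)^{|m|}; moreover there exists a constant C_α > 0, independent of m, such that for every m ∈ ℤ with m ≠ 0 and every r ∈ (0,1]: |u_m(r)| ≤ C_α e^{αr} (2αr)^{-|m|} Γ(2|m|). -/
open scoped Real

noncomputable section

/-- Tricomi's confluent hypergeometric function `U(a,b,z)` for `a > 0`, `z > 0`,
via its integral representation. -/
noncomputable def tricomiU (a b z : ℝ) : ℝ :=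
  (Real.Gamma a)⁻¹ * ∫ t in Set.Ioi (0:ℝ), Real.exp (-(z*t)) * t ^ (a-1) * (1+t) ^ (b-a-1)

/-- `v_m(r) = e^{-αr} (2αr)^{|m|} M(1/2+|m|+m, 1+2|m|, 2αr)`. -/
noncomputable def vm (α : ℝ) (m : ℤ) (r : ℝ) : ℝ :=
  Real.exp (-(α*r)) * (2*α*r) ^ (m.natAbs) *
    kummerM (1/2 + (m.natAbs : ℝ) + (m : ℝ)) (1 + 2*(m.natAbs:ℝ)) (2*α*r)

/-- `u_m(r) = e^{-αr} (2αr)^{|m|} U(1/2+|m|+m, 1+2|m|, 2αr)`. -/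
noncomputable def um (α : ℝ) (m : ℤ) (r : ℝ) : ℝ :=
  Real.exp (-(α*r)) * (2*α*r) ^ (m.natAbs) *
    tricomiU (1/2 + (m.natAbs : ℝ) + (m : ℝ)) (1 + 2*(m.natAbs:ℝ)) (2*α*r)

namespace Stmt16Aux

open MeasureTheory Set Finset

lemma int_gamma {s z : ℝ} (hs : 0 < s) (hz : 0 < z) :
    ∫ t in Ioi (0:ℝ), Real.exp (-(z*t)) * t ^ (s-1) = Real.Gamma s * z ^ (-s) := by
  have h := Real.integral_rpow_mul_exp_neg_mul_Ioi hs hz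
  rw [show (∫ t in Ioi (0:ℝ), Real.exp (-(z*t)) * t ^ (s-1))
      = ∫ t in Ioi (0:ℝ), t ^ (s-1) * Real.exp (-(z*t)) from by congr 1; funext t; ring,
    h, one_div, Real.inv_rpow hz.le, ← Real.rpow_neg hz.le, mul_comm]

lemma int_able {s z : ℝ} (hs : 0 < s) (hz : 0 < z) :
    IntegrableOn (fun t : ℝ => Real.exp (-(z*t)) * t ^ (s-1)) (Ioi 0) := by
  have h := integrableOn_rpow_mul_exp_neg_mul_rpow (p := 1) (s := s - 1) (b := z)
    (by linarith) zero_lt_one hz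
  simpa [Real.rpow_one, neg_mul, mul_comm] using h

lemma gamma_half_le (k : ℕ) : Real.Gamma ((k:ℝ) + 1/2) ≤ Real.sqrt Real.pi * k.factorial := by
  induction k with
  | zero =>
      rw [show ((0:ℕ):ℝ) + 1/2 = 1/2 by norm_num, Real.Gamma_one_half_eq]; simp
  | succ k ih =>
    have h1 : (((k+1:ℕ)):ℝ) + 1/2 = ((k:ℝ) + 1/2) + 1 := by push_cast; ring
    rw [h1, Real.Gamma_add_one (by positivity)]
    have hpos : 0 ≤ Real.Gamma ((k:ℝ)+1/2) := (Real.Gamma_pos_of_pos (by positivity)).le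
    calc ((k:ℝ)+1/2) * Real.Gamma ((k:ℝ)+1/2)
        ≤ ((k:ℝ)+1) * (Real.sqrt Real.pi * k.factorial) := by
          apply mul_le_mul (by linarith) ih hpos (by positivity)
      _ = Real.sqrt Real.pi * (k+1).factorial := by
          rw [Nat.factorial_succ]; push_cast; ring

lemma sqrt_one_add_le {t : ℝ} (ht : 0 ≤ t) : (1+t) ^ ((1:ℝ)/2) ≤ 1 + t ^ ((1:ℝ)/2) := by
  rw [← Real.sqrt_eq_rpow, ← Real.sqrt_eq_rpow]
  nlinarith [Real.sq_sqrt ht, Real.sqrt_nonneg t, Real.sqrt_nonneg (1+t),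
    Real.sq_sqrt (show (0:ℝ) ≤ 1+t by linarith)]

lemma kummer_bound {a b z : ℝ} (ha : 0 < a) (hab : a ≤ b) (hz : 0 ≤ z) :
    0 ≤ kummerM a b z ∧ kummerM a b z ≤ Real.exp z := by
  have hb : 0 < b := lt_of_lt_of_le ha hab
  have hpa : ∀ n, 0 < poch a n := fun n => Finset.prod_pos fun k _ => by positivity
  have hpb : ∀ n, 0 < poch b n := fun n => Finset.prod_pos fun k _ => by positivity
  have hterm0 : ∀ n : ℕ, 0 ≤ poch a n / poch b n * z ^ n / (n.factorial : ℝ) := by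
    intro n
    have := hpa n; have := hpb n
    positivity
  have hterm : ∀ n : ℕ, poch a n / poch b n * z ^ n / (n.factorial : ℝ)
      ≤ z ^ n / (n.factorial : ℝ) := by
    intro n
    have hle : poch a n ≤ poch b n :=
      Finset.prod_le_prod (fun k _ => by positivity) (fun k _ => by linarith)
    have h1 : poch a n / poch b n ≤ 1 := (div_le_one (hpb n)).mpr hle
    have h2 : (0:ℝ) ≤ z ^ n / (n.factorial : ℝ) := by positivity
    calc poch a n / poch b n * z ^ n / (n.factorial : ℝ)
        = poch a n / poch b n * (z ^ n / (n.factorial : ℝ)) := by ring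
      _ ≤ 1 * (z ^ n / (n.factorial : ℝ)) := mul_le_mul_of_nonneg_right h1 h2
      _ = z ^ n / (n.factorial : ℝ) := one_mul _
  have hgsum : Summable (fun n : ℕ => z ^ n / (n.factorial : ℝ)) :=
    Real.summable_pow_div_factorial z
  have hfsum : Summable (fun n : ℕ => poch a n / poch b n * z ^ n / (n.factorial : ℝ)) :=
    Summable.of_nonneg_of_le hterm0 hterm hgsum
  refine ⟨tsum_nonneg hterm0, ?_⟩
  calc kummerM a b z ≤ ∑' n : ℕ, z ^ n / (n.factorial : ℝ) := Summable.tsum_le_tsum hterm hfsum hgsum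
    _ = Real.exp z := by
        rw [Real.exp_eq_exp_ℝ, NormedSpace.exp_eq_tsum_div]

lemma U_nonneg {a b z : ℝ} (ha : 0 < a) : 0 ≤ tricomiU a b z := by
  unfold tricomiU
  apply mul_nonneg (inv_nonneg.mpr (Real.Gamma_pos_of_pos ha).le)
  apply integral_nonneg_of_ae
  filter_upwards [ae_restrict_mem measurableSet_Ioi] with t ht
  have ht' : (0:ℝ) < t := ht
  have h1t : (0:ℝ) < 1 + t := by linarith
  positivity

lemma U_pos (n : ℕ) (hn : 1 ≤ n) {z : ℝ} (hz : 0 < z) :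
    tricomiU (1/2 + 2*(n:ℝ)) (1 + 2*(n:ℝ)) z
      ≤ ((2*n-1).factorial : ℝ) * z ^ (-(2*(n:ℝ))) := by
  have hn' : (1:ℝ) ≤ (n:ℝ) := by exact_mod_cast hn
  have hGam : Real.Gamma (2*(n:ℝ)) = ((2*n-1).factorial : ℝ) := by
    rw [show 2*(n:ℝ) = ((2*n-1 : ℕ):ℝ) + 1 by
      push_cast [Nat.cast_sub (show 1 ≤ 2*n by omega)]; ring]
    exact Real.Gamma_nat_eq_factorial _
  have key : (∫ t in Ioi (0:ℝ), Real.exp (-(z*t)) * t ^ (1/2 + 2*(n:ℝ) - 1) *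
        (1+t) ^ (1 + 2*(n:ℝ) - (1/2 + 2*(n:ℝ)) - 1))
      ≤ Real.Gamma (2*(n:ℝ)) * z ^ (-(2*(n:ℝ))) := by
    rw [← int_gamma (s := 2*(n:ℝ)) (by positivity) hz]
    apply integral_mono_of_nonneg
    · filter_upwards [ae_restrict_mem measurableSet_Ioi] with t ht
      have ht' : (0:ℝ) < t := ht
      have h1t : (0:ℝ) < 1 + t := by linarith
      positivity
    · exact int_able (by positivity) hz
    · filter_upwards [ae_restrict_mem measurableSet_Ioi] with t ht
      have ht' : (0:ℝ) < t := ht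
      have h1t : (0:ℝ) < 1 + t := by linarith
      simp only [show (1 + 2*(n:ℝ) - (1/2 + 2*(n:ℝ)) - 1 : ℝ) = -(1/2) from by ring]
      have hb : (1+t) ^ (-(1/2):ℝ) ≤ t ^ (-(1/2):ℝ) := by
        rw [Real.rpow_neg h1t.le, Real.rpow_neg ht'.le]
        exact inv_anti₀ (Real.rpow_pos_of_pos ht' _)
          (Real.rpow_le_rpow ht'.le (by linarith) (by norm_num))
      calc Real.exp (-(z*t)) * t ^ (1/2 + 2*(n:ℝ) - 1) * (1+t) ^ (-(1/2):ℝ)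
          ≤ Real.exp (-(z*t)) * t ^ (1/2 + 2*(n:ℝ) - 1) * t ^ (-(1/2):ℝ) := by
            apply mul_le_mul_of_nonneg_left hb; positivity
        _ = Real.exp (-(z*t)) * t ^ (2*(n:ℝ)-1) := by
            rw [mul_assoc, ← Real.rpow_add ht']
            congr 2; ring
  have hga : 1 ≤ Real.Gamma (1/2 + 2*(n:ℝ)) := by
    have h := Real.Gamma_strictMonoOn_Ici.monotoneOn (Set.mem_Ici.mpr le_rfl)
      (Set.mem_Ici.mpr (show (2:ℝ) ≤ 1/2 + 2*(n:ℝ) by linarith))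
      (show (2:ℝ) ≤ 1/2 + 2*(n:ℝ) by linarith)
    rwa [Real.Gamma_two] at h
  have hI0 : 0 ≤ ∫ t in Ioi (0:ℝ), Real.exp (-(z*t)) * t ^ (1/2 + 2*(n:ℝ) - 1) *
      (1+t) ^ (1 + 2*(n:ℝ) - (1/2 + 2*(n:ℝ)) - 1) := by
    apply integral_nonneg_of_ae
    filter_upwards [ae_restrict_mem measurableSet_Ioi] with t ht
    have ht' : (0:ℝ) < t := ht
    have h1t : (0:ℝ) < 1 + t := by linarith
    positivity
  unfold tricomiU
  calc (Real.Gamma (1/2 + 2*(n:ℝ)))⁻¹ * ∫ t in Ioi (0:ℝ), Real.exp (-(z*t)) *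
          t ^ (1/2 + 2*(n:ℝ) - 1) * (1+t) ^ (1 + 2*(n:ℝ) - (1/2 + 2*(n:ℝ)) - 1)
      ≤ 1 * ∫ t in Ioi (0:ℝ), Real.exp (-(z*t)) * t ^ (1/2 + 2*(n:ℝ) - 1) *
          (1+t) ^ (1 + 2*(n:ℝ) - (1/2 + 2*(n:ℝ)) - 1) := by
        apply mul_le_mul_of_nonneg_right _ hI0
        exact inv_le_one_of_one_le₀ hga
    _ ≤ Real.Gamma (2*(n:ℝ)) * z ^ (-(2*(n:ℝ))) := by rw [one_mul]; exact key
    _ = ((2*n-1).factorial : ℝ) * z ^ (-(2*(n:ℝ))) := by rw [hGam]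

lemma U_neg (n : ℕ) (hn : 1 ≤ n) {z M : ℝ} (hz : 0 < z) (hzM : z ≤ M) (hM1 : 1 ≤ M) :
    tricomiU (1/2) (1 + 2*(n:ℝ)) z ≤
      (1 + Real.sqrt Real.pi * M) * Real.exp M / Real.sqrt Real.pi *
        ((2*n-1).factorial : ℝ) * z ^ (-(2*(n:ℝ))) := by
  have hM0 : (0:ℝ) < M := by linarith
  set K := 2*n - 1 with hKdef
  have hKc : ((K:ℕ):ℝ) = 2*(n:ℝ) - 1 := by
    rw [hKdef]; push_cast [Nat.cast_sub (show 1 ≤ 2*n by omega)]; ring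
  set G : ℝ → ℝ := fun t => ∑ k ∈ range (K+1), (K.choose k : ℝ) *
    (Real.exp (-(z*t)) * t ^ (((k:ℝ)+1)-1) + Real.exp (-(z*t)) * t ^ (((k:ℝ)+1/2)-1))
    with hGdef
  have hGint : IntegrableOn G (Ioi 0) := by
    apply integrable_finset_sum
    intro k _
    exact ((int_able (by positivity) hz).add (int_able (by positivity) hz)).const_mul _
  -- value of ∫ G
  have hGval : ∫ t in Ioi (0:ℝ), G t = ∑ k ∈ range (K+1), (K.choose k : ℝ) *
      ((k.factorial:ℝ) * z ^ (-((k:ℝ)+1)) + Real.Gamma ((k:ℝ)+1/2) * z ^ (-((k:ℝ)+1/2))) := by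
    rw [hGdef]
    rw [integral_finset_sum]
    · refine Finset.sum_congr rfl fun k _ => ?_
      rw [integral_const_mul, integral_add (int_able (show (0:ℝ) < (k:ℝ)+1 by positivity) hz)
          (int_able (show (0:ℝ) < (k:ℝ)+1/2 by positivity) hz),
        int_gamma (show (0:ℝ) < (k:ℝ)+1 by positivity) hz,
        int_gamma (show (0:ℝ) < (k:ℝ)+1/2 by positivity) hz,
        Real.Gamma_nat_eq_factorial]
    · intro k _
      exact ((int_able (show (0:ℝ) < (k:ℝ)+1 by positivity) hz).add
        (int_able (show (0:ℝ) < (k:ℝ)+1/2 by positivity) hz)).const_mul _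
  -- the integral inequality
  have key : (∫ t in Ioi (0:ℝ), Real.exp (-(z*t)) * t ^ ((1:ℝ)/2 - 1) *
        (1+t) ^ (1 + 2*(n:ℝ) - 1/2 - 1)) ≤ ∫ t in Ioi (0:ℝ), G t := by
    apply integral_mono_of_nonneg
    · filter_upwards [ae_restrict_mem measurableSet_Ioi] with t ht
      have ht' : (0:ℝ) < t := ht
      have h1t : (0:ℝ) < 1 + t := by linarith
      positivity
    · exact hGint
    · filter_upwards [ae_restrict_mem measurableSet_Ioi] with t ht
      have ht' : (0:ℝ) < t := ht
      have h1t : (0:ℝ) < 1 + t := by linarith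
      simp only [show ((1:ℝ)/2 - 1 : ℝ) = -(1/2) from by norm_num,
        show (1 + 2*(n:ℝ) - 1/2 - 1 : ℝ) = (K:ℝ) + 1/2 from by rw [hKc]; ring]
      have s1 : (1+t) ^ ((K:ℝ)+1/2) = (1+t)^K * (1+t) ^ ((1:ℝ)/2) := by
        rw [← Real.rpow_natCast (1+t) K, ← Real.rpow_add h1t]
      have s2 : (1+t) ^ ((1:ℝ)/2) ≤ 1 + t ^ ((1:ℝ)/2) := sqrt_one_add_le ht'.le
      have step1 : Real.exp (-(z*t)) * t ^ (-(1/2):ℝ) * (1+t) ^ ((K:ℝ)+1/2)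
          ≤ (1+t)^K * (Real.exp (-(z*t)) * t ^ (-(1/2):ℝ) + Real.exp (-(z*t))) := by
        rw [s1]
        calc Real.exp (-(z*t)) * t ^ (-(1/2):ℝ) * ((1+t)^K * (1+t) ^ ((1:ℝ)/2))
            ≤ Real.exp (-(z*t)) * t ^ (-(1/2):ℝ) * ((1+t)^K * (1 + t ^ ((1:ℝ)/2))) := by
              apply mul_le_mul_of_nonneg_left
                (mul_le_mul_of_nonneg_left s2 (pow_nonneg h1t.le K))
              positivity
          _ = (1+t)^K * (Real.exp (-(z*t)) * t ^ (-(1/2):ℝ)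
                + Real.exp (-(z*t)) * (t ^ (-(1/2):ℝ) * t ^ ((1:ℝ)/2))) := by ring
          _ = (1+t)^K * (Real.exp (-(z*t)) * t ^ (-(1/2):ℝ) + Real.exp (-(z*t))) := by
              rw [← Real.rpow_add ht']; norm_num
      have expand : ((1+t):ℝ)^K = ∑ k ∈ range (K+1), t^k * (K.choose k : ℝ) := by
        rw [show (1:ℝ)+t = t+1 by ring, add_pow]; simp
      refine step1.trans ?_
      rw [expand, Finset.sum_mul, hGdef]
      refine le_of_eq (Finset.sum_congr rfl fun k _ => ?_)
      have e1 : ((k:ℝ)+1)-1 = (k:ℝ) := by ring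
      have e2 : ((k:ℝ)+1/2)-1 = (k:ℝ) + (-(1/2)) := by ring
      rw [e1, e2, Real.rpow_add ht', ← Real.rpow_natCast t k]
      ring
  -- bound the sum
  have hsum : (∑ k ∈ range (K+1), (K.choose k : ℝ) *
      ((k.factorial:ℝ) * z ^ (-((k:ℝ)+1)) + Real.Gamma ((k:ℝ)+1/2) * z ^ (-((k:ℝ)+1/2))))
      ≤ (1 + Real.sqrt Real.pi * M) * Real.exp M * (K.factorial:ℝ) * z ^ (-(2*(n:ℝ))) := by
    have h0z : (0:ℝ) ≤ z ^ (-(2*(n:ℝ))) := Real.rpow_nonneg hz.le _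
    calc (∑ k ∈ range (K+1), (K.choose k : ℝ) *
        ((k.factorial:ℝ) * z ^ (-((k:ℝ)+1)) + Real.Gamma ((k:ℝ)+1/2) * z ^ (-((k:ℝ)+1/2))))
        ≤ ∑ k ∈ range (K+1), (1 + Real.sqrt Real.pi * M) * z ^ (-(2*(n:ℝ))) *
            ((K.choose k : ℝ) * (k.factorial:ℝ) * M^(K-k)) := by
          refine Finset.sum_le_sum fun k hk => ?_
          have hkK : k ≤ K := Nat.lt_succ_iff.mp (Finset.mem_range.mp hk)
          have hjc : (((K-k:ℕ)):ℝ) = 2*(n:ℝ) - 1 - k := by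
            push_cast [Nat.cast_sub hkK]; rw [hKc]
          have ez1 : z ^ (-((k:ℝ)+1)) = z ^ (-(2*(n:ℝ))) * z^(K-k) := by
            rw [← Real.rpow_natCast z (K-k), ← Real.rpow_add hz]
            congr 1; rw [hjc]; ring
          have ez2 : z ^ (-((k:ℝ)+1/2)) = z ^ (-(2*(n:ℝ))) * z ^ ((((K-k:ℕ)):ℝ)+1/2) := by
            rw [← Real.rpow_add hz]; congr 1; rw [hjc]; ring
          have hzj : z^(K-k) ≤ M^(K-k) := pow_le_pow_left₀ hz.le hzM _
          have hz2 : z ^ ((((K-k:ℕ)):ℝ)+1/2) ≤ M^(K-k) * M := by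
            calc z ^ ((((K-k:ℕ)):ℝ)+1/2) ≤ M ^ ((((K-k:ℕ)):ℝ)+1/2) :=
                  Real.rpow_le_rpow hz.le hzM (by positivity)
              _ ≤ M ^ ((((K-k:ℕ)):ℝ)+1) :=
                  Real.rpow_le_rpow_of_exponent_le hM1 (by norm_num)
              _ = M^(K-k) * M := by
                  rw [Real.rpow_add hM0, Real.rpow_natCast, Real.rpow_one]
          have hγ : Real.Gamma ((k:ℝ)+1/2) ≤ Real.sqrt Real.pi * k.factorial :=
            gamma_half_le k
          have hΓ0 : (0:ℝ) ≤ Real.Gamma ((k:ℝ)+1/2) :=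
            (Real.Gamma_pos_of_pos (by positivity)).le
          calc (K.choose k : ℝ) *
              ((k.factorial:ℝ) * z ^ (-((k:ℝ)+1)) + Real.Gamma ((k:ℝ)+1/2) * z ^ (-((k:ℝ)+1/2)))
              = (K.choose k : ℝ) * ((k.factorial:ℝ) * (z ^ (-(2*(n:ℝ))) * z^(K-k))
                + Real.Gamma ((k:ℝ)+1/2) * (z ^ (-(2*(n:ℝ))) * z ^ ((((K-k:ℕ)):ℝ)+1/2))) := by
                rw [ez1, ez2]
            _ ≤ (K.choose k : ℝ) * ((k.factorial:ℝ) * (z ^ (-(2*(n:ℝ))) * M^(K-k))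
                + (Real.sqrt Real.pi * k.factorial) * (z ^ (-(2*(n:ℝ))) * (M^(K-k) * M))) := by
                have hzz : (0:ℝ) ≤ z ^ ((((K-k:ℕ)):ℝ)+1/2) := Real.rpow_nonneg hz.le _
                gcongr
            _ = (1 + Real.sqrt Real.pi * M) * z ^ (-(2*(n:ℝ))) *
                ((K.choose k : ℝ) * (k.factorial:ℝ) * M^(K-k)) := by ring
      _ = (1 + Real.sqrt Real.pi * M) * z ^ (-(2*(n:ℝ))) *
            ∑ k ∈ range (K+1), ((K.choose k : ℝ) * (k.factorial:ℝ) * M^(K-k)) := by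
          rw [Finset.mul_sum]
      _ ≤ (1 + Real.sqrt Real.pi * M) * z ^ (-(2*(n:ℝ))) * ((K.factorial:ℝ) * Real.exp M) := by
          apply mul_le_mul_of_nonneg_left _ (by positivity)
          have hT : (∑ k ∈ range (K+1), ((K.choose k : ℝ) * (k.factorial:ℝ) * M^(K-k)))
              = (K.factorial:ℝ) * ∑ k ∈ range (K+1), M^(K-k) / ((K-k).factorial:ℝ) := by
            rw [Finset.mul_sum]
            refine Finset.sum_congr rfl fun k hk => ?_
            have hkK : k ≤ K := Nat.lt_succ_iff.mp (Finset.mem_range.mp hk)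
            have hfac : (K.choose k : ℝ) * (k.factorial:ℝ) * ((K-k).factorial:ℝ)
                = (K.factorial:ℝ) := by
              exact_mod_cast congrArg Nat.cast (Nat.choose_mul_factorial_mul_factorial hkK)
            rw [mul_div_assoc', eq_div_iff (by positivity : ((K-k).factorial:ℝ) ≠ 0)]
            linear_combination M^(K-k) * hfac
          rw [hT]
          apply mul_le_mul_of_nonneg_left _ (by positivity)
          have hreflect : (∑ k ∈ range (K+1), M^(K-k) / ((K-k).factorial:ℝ))
              = ∑ j ∈ range (K+1), M^j / (j.factorial:ℝ) := by
            have h := Finset.sum_range_reflect (fun j => M^j / (j.factorial:ℝ)) (K+1)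
            simpa using h
          rw [hreflect]
          exact Real.sum_le_exp_of_nonneg hM0.le _
      _ = (1 + Real.sqrt Real.pi * M) * Real.exp M * (K.factorial:ℝ) * z ^ (-(2*(n:ℝ))) := by
          ring
  -- assemble
  unfold tricomiU
  rw [Real.Gamma_one_half_eq]
  have hsπ : (0:ℝ) < Real.sqrt Real.pi := Real.sqrt_pos.mpr Real.pi_pos
  calc (Real.sqrt Real.pi)⁻¹ * ∫ t in Ioi (0:ℝ), Real.exp (-(z*t)) * t ^ ((1:ℝ)/2-1) *
          (1+t) ^ (1 + 2*(n:ℝ) - 1/2 - 1)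
      ≤ (Real.sqrt Real.pi)⁻¹ *
          ((1 + Real.sqrt Real.pi * M) * Real.exp M * (K.factorial:ℝ) * z ^ (-(2*(n:ℝ)))) := by
        apply mul_le_mul_of_nonneg_left _ (inv_nonneg.mpr hsπ.le)
        exact key.trans (by rw [hGval]; exact hsum)
    _ = (1 + Real.sqrt Real.pi * M) * Real.exp M / Real.sqrt Real.pi *
          ((2*n-1).factorial : ℝ) * z ^ (-(2*(n:ℝ))) := by
        rw [hKdef]; field_simp

end Stmt16Aux

open Stmt16Aux in
theorem stmt16 (α : ℝ) (hα : 0 < α) :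
    (∀ m : ℤ, ∀ r : ℝ, 0 < r → r ≤ 1 →
      |vm α m r| ≤ Real.exp (α*r) * (2*α*r) ^ (m.natAbs)) ∧
    ∃ C : ℝ, 0 < C ∧ ∀ m : ℤ, m ≠ 0 → ∀ r : ℝ, 0 < r → r ≤ 1 →
      |um α m r| ≤ C * Real.exp (α*r) * (2*α*r) ^ (-(m.natAbs:ℝ)) *
        Real.Gamma (2*(m.natAbs:ℝ)) := by
  have habs : ∀ m : ℤ, ((m.natAbs : ℝ)) = |(m:ℝ)| := by
    intro m
    simp [Nat.cast_natAbs]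
  constructor
  · -- part 1
    intro m r hr hr1
    have hz : (0:ℝ) < 2*α*r := by positivity
    have ha : (0:ℝ) < 1/2 + (m.natAbs : ℝ) + (m:ℝ) := by
      have h1 : -((m.natAbs : ℝ)) ≤ (m:ℝ) := by rw [habs]; exact neg_abs_le _
      linarith
    have hab : 1/2 + (m.natAbs : ℝ) + (m:ℝ) ≤ 1 + 2*(m.natAbs:ℝ) := by
      have h1 : (m:ℝ) ≤ ((m.natAbs : ℝ)) := by rw [habs]; exact le_abs_self _
      linarith
    obtain ⟨hM0, hMle⟩ := kummer_bound ha hab hz.le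
    unfold vm
    rw [abs_of_nonneg (by positivity)]
    calc Real.exp (-(α*r)) * (2*α*r) ^ (m.natAbs) *
          kummerM (1/2 + (m.natAbs : ℝ) + (m : ℝ)) (1 + 2*(m.natAbs:ℝ)) (2*α*r)
        ≤ Real.exp (-(α*r)) * (2*α*r) ^ (m.natAbs) * Real.exp (2*α*r) := by
          apply mul_le_mul_of_nonneg_left hMle; positivity
      _ = (Real.exp (-(α*r)) * Real.exp (2*α*r)) * (2*α*r) ^ (m.natAbs) := by ring
      _ = Real.exp (α*r) * (2*α*r) ^ (m.natAbs) := by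
          rw [← Real.exp_add, show -(α*r) + 2*α*r = α*r by ring]
  · -- part 2
    set M : ℝ := max 1 (2*α) with hMdef
    have hM1 : (1:ℝ) ≤ M := le_max_left _ _
    have hM0 : (0:ℝ) < M := by linarith
    have hsπ : (0:ℝ) < Real.sqrt Real.pi := Real.sqrt_pos.mpr Real.pi_pos
    set C₀ : ℝ := (1 + Real.sqrt Real.pi * M) * Real.exp M / Real.sqrt Real.pi with hC₀def
    have hsM : (0:ℝ) < 1 + Real.sqrt Real.pi * M := by nlinarith [mul_pos hsπ hM0]
    have hC₀0 : 0 ≤ C₀ := by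
      apply div_nonneg _ hsπ.le
      exact (mul_pos hsM (Real.exp_pos M)).le
    have hC₀1 : 1 ≤ C₀ := by
      rw [hC₀def, le_div_iff₀ hsπ]
      have he : (1:ℝ) ≤ Real.exp M := by nlinarith [Real.add_one_le_exp M]
      have h3 : Real.sqrt Real.pi ≤ 1 + Real.sqrt Real.pi * M := by
        nlinarith [mul_nonneg hsπ.le (sub_nonneg.mpr hM1)]
      nlinarith [mul_le_mul_of_nonneg_left he hsM.le]
    refine ⟨C₀ + 1, by linarith, ?_⟩
    intro m hm r hr hr1
    set n := m.natAbs with hndef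
    have hn : 1 ≤ n := Int.natAbs_pos.mpr hm
    have hn' : (1:ℝ) ≤ (n:ℝ) := by exact_mod_cast hn
    have hz : (0:ℝ) < 2*α*r := by positivity
    have hzM : 2*α*r ≤ M := by
      have h2 : 2*α ≤ M := le_max_right _ _
      nlinarith
    have hGam : Real.Gamma (2*(n:ℝ)) = ((2*n-1).factorial : ℝ) := by
      rw [show 2*(n:ℝ) = ((2*n-1 : ℕ):ℝ) + 1 by
        push_cast [Nat.cast_sub (show 1 ≤ 2*n by omega)]; ring]
      exact Real.Gamma_nat_eq_factorial _
    have hpow : (2*α*r) ^ (n:ℕ) * (2*α*r) ^ (-(2*(n:ℝ))) = (2*α*r) ^ (-(n:ℝ)) := by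
      rw [← Real.rpow_natCast (2*α*r) n, ← Real.rpow_add hz]
      congr 1; ring
    -- bound on tricomiU in both sign cases
    have hU : tricomiU (1/2 + (n : ℝ) + (m : ℝ)) (1 + 2*(n:ℝ)) (2*α*r)
        ≤ C₀ * ((2*n-1).factorial : ℝ) * (2*α*r) ^ (-(2*(n:ℝ))) := by
      rcases hm.lt_or_gt with hneg | hpos
      · have h3 : ((n : ℝ)) = -(m:ℝ) := by
          rw [hndef, habs]
          exact abs_of_nonpos (by exact_mod_cast hneg.le)
        have hmr : (m:ℝ) = -(n:ℝ) := by linarith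
        rw [show (1/2 + (n : ℝ) + (m : ℝ)) = 1/2 by rw [hmr]; ring]
        exact U_neg n hn hz hzM hM1
      · have hmr : (m:ℝ) = (n:ℝ) := by
          rw [hndef, habs]
          exact (abs_of_nonneg (by exact_mod_cast hpos.le)).symm
        rw [show (1/2 + (n : ℝ) + (m : ℝ)) = 1/2 + 2*(n:ℝ) by rw [hmr]; ring]
        refine (U_pos n hn hz).trans ?_
        have h1 : (0:ℝ) ≤ ((2*n-1).factorial : ℝ) * (2*α*r) ^ (-(2*(n:ℝ))) := by
          have := Real.rpow_nonneg hz.le (-(2*(n:ℝ)))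
          positivity
        nlinarith
    have hUnn : 0 ≤ tricomiU (1/2 + (n : ℝ) + (m : ℝ)) (1 + 2*(n:ℝ)) (2*α*r) := by
      apply U_nonneg
      have h1 : -((n : ℝ)) ≤ (m:ℝ) := by rw [hndef, habs]; exact neg_abs_le _
      linarith
    unfold um
    rw [abs_of_nonneg (by positivity)]
    calc Real.exp (-(α*r)) * (2*α*r) ^ (n:ℕ) *
          tricomiU (1/2 + (n : ℝ) + (m : ℝ)) (1 + 2*(n:ℝ)) (2*α*r)
        ≤ Real.exp (-(α*r)) * (2*α*r) ^ (n:ℕ) *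
          (C₀ * ((2*n-1).factorial : ℝ) * (2*α*r) ^ (-(2*(n:ℝ)))) := by
          apply mul_le_mul_of_nonneg_left hU; positivity
      _ = C₀ * Real.exp (-(α*r)) * ((2*α*r) ^ (n:ℕ) * (2*α*r) ^ (-(2*(n:ℝ)))) *
          ((2*n-1).factorial : ℝ) := by ring
      _ = C₀ * Real.exp (-(α*r)) * (2*α*r) ^ (-(n:ℝ)) * ((2*n-1).factorial : ℝ) := by
          rw [hpow]
      _ ≤ (C₀ + 1) * Real.exp (α*r) * (2*α*r) ^ (-(n:ℝ)) * ((2*n-1).factorial : ℝ) := by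
          have h1 : Real.exp (-(α*r)) ≤ Real.exp (α*r) := Real.exp_le_exp.mpr (by nlinarith)
          have hz' : (0:ℝ) ≤ (2*α*r) ^ (-(n:ℝ)) := Real.rpow_nonneg hz.le _
          apply mul_le_mul_of_nonneg_right _ (Nat.cast_nonneg _)
          apply mul_le_mul_of_nonneg_right _ hz'
          exact mul_le_mul (by linarith) h1 (Real.exp_pos _).le (by linarith)
      _ = (C₀ + 1) * Real.exp (α*r) * (2*α*r) ^ (-(n:ℝ)) * Real.Gamma (2*(n:ℝ)) := by
          rw [hGam]
end
end
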